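/- Let n ≥ 1, let σ be a congruence on P_n^Φ, and let i ∈ ℕ. Then the relation σ_{1i} := {(α,β) ∈ D_1 × D_1 : ((i,α),(i,β)) ∈ σ} is one of the following seven relations on D_1: the equality relation; μ↑ := {(α,β) : α̂ = β̂ and α R β}; μ↓ := {(α,β) : α̂ = β̂ and α L β}; {(α,β) : α̂ = β̂}; {(α,β) : α̂ R β̂}; {(α,β) : α̂ L β̂}; or the full relation D_1 × D_1. -/

import Mathlib

namespace TPM

/-- Vertex set `{1,…,n} ∪ {1',…,n'}`: `Sum.inl` = unprimed (upper row),
`Sum.inr` = primed (lower row). -/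
abbrev V (n : ℕ) := Fin n ⊕ Fin n

/-- The partition monoid `P_n`: set partitions of the `2n`-element set `V n`,
encoded as equivalence relations (setoids). -/
abbrev PM (n : ℕ) := Setoid (V n)

/-- Three-row vertex set of the product graph: top / middle / bottom. -/
abbrev W (n : ℕ) := Fin n ⊕ (Fin n ⊕ Fin n)

variable {n : ℕ}

/-- First factor: unprimed ↦ top, primed ↦ middle. -/
def topMid : V n → W n
  | Sum.inl i => Sum.inl i
  | Sum.inr i => Sum.inr (Sum.inl i)

/-- Second factor: unprimed ↦ middle, primed ↦ bottom. -/
def midBot : V n → W n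
  | Sum.inl i => Sum.inr (Sum.inl i)
  | Sum.inr i => Sum.inr (Sum.inr i)

/-- Embedding of `V n` as top and bottom rows of the three-row set. -/
def topBot : V n → W n
  | Sum.inl i => Sum.inl i
  | Sum.inr i => Sum.inr (Sum.inr i)

/-- Edge relation of the product graph `Γ(α,β)`. -/
def graphRel (α β : PM n) (x y : W n) : Prop :=
  (∃ u v : V n, α.r u v ∧ x = topMid u ∧ y = topMid v) ∨
  (∃ u v : V n, β.r u v ∧ x = midBot u ∧ y = midBot v)

/-- Connectivity (equivalence closure of the edge relation) in `Γ(α,β)`. -/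
def conn (α β : PM n) : W n → W n → Prop := Relation.EqvGen (graphRel α β)

/-- Connectivity in `Γ(α,β)`, as a setoid on the three-row vertex set. -/
def connSetoid (α β : PM n) : Setoid (W n) :=
  ⟨conn α β, Relation.EqvGen.is_equivalence _⟩

/-- The product of two partitions: `x,y` lie in the same block of `αβ` iff they are
connected in `Γ(α,β)`. -/
def pmul (α β : PM n) : PM n :=
  ⟨fun x y => conn α β (topBot x) (topBot y),
    ⟨fun _ => Relation.EqvGen.refl _, fun h => Relation.EqvGen.symm _ _ h, fun h h' => Relation.EqvGen.trans _ _ _ h h'⟩⟩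

/-- A vertex of the three-row set lies in the middle row. -/
def isMid (x : W n) : Prop := ∃ i : Fin n, x = Sum.inr (Sum.inl i)

/-- `Φ(α,β)`: the number of floating components of `Γ(α,β)`, i.e. connected components
all of whose vertices lie in the middle row. -/
noncomputable def Phi (α β : PM n) : ℕ :=
  Nat.card {c : Quotient (connSetoid α β) //
    ∀ x : W n, Quotient.mk (connSetoid α β) x = c → isMid x}

/-- The rank of a partition: the number of transversal blocks (blocks containing both an
unprimed and a primed element). -/
noncomputable def rnk (α : PM n) : ℕ :=
  Nat.card {c : Quotient α //
    (∃ i : Fin n, Quotient.mk α (Sum.inl i) = c) ∧ ∃ i : Fin n, Quotient.mk α (Sum.inr i) = c}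

/-- Which row of `V n` a point lies in. -/
def side : V n → Bool
  | Sum.inl _ => true
  | Sum.inr _ => false

/-- `α̂`: split each transversal of `α` into its unprimed part and its primed part. -/
def hat (α : PM n) : PM n :=
  ⟨fun x y => α.r x y ∧ side x = side y,
    ⟨fun x => ⟨α.iseqv.refl x, rfl⟩,
     fun h => ⟨α.iseqv.symm h.1, h.2.symm⟩,
     fun h h' => ⟨α.iseqv.trans h.1 h'.1, h.2.trans h'.2⟩⟩⟩

/-- The twisted product on `ℕ × P_n`:  `(i,α)(j,β) = (i + j + Φ(α,β), αβ)`. -/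
noncomputable def tmul (a b : ℕ × PM n) : ℕ × PM n :=
  (a.1 + b.1 + Phi a.2 b.2, pmul a.2 b.2)

/-- A congruence on a set equipped with a binary operation: an equivalence relation
compatible with the operation on both sides. -/
def IsCongruence {M : Type*} (mul : M → M → M) (σ : M → M → Prop) : Prop :=
  Equivalence σ ∧ ∀ x y a, σ x y → σ (mul a x) (mul a y) ∧ σ (mul x a) (mul y a)

/-- Green's relation `R`: equality of the right ideals `xM = yM`. -/
def greenR {M : Type*} (mul : M → M → M) (x y : M) : Prop :=
  Set.range (mul x) = Set.range (mul y)

/-- Green's relation `L`: `Mx = My`. -/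
def greenL {M : Type*} (mul : M → M → M) (x y : M) : Prop :=
  Set.range (fun a => mul a x) = Set.range (fun a => mul a y)

/-- The principal two-sided ideal `MxM`. -/
def jSet {M : Type*} (mul : M → M → M) (x : M) : Set M :=
  Set.range (fun p : M × M => mul (mul p.1 x) p.2)

/-- Green's relation `J`: `MxM = MyM`. -/
def greenJ {M : Type*} (mul : M → M → M) (x y : M) : Prop :=
  jSet mul x = jSet mul y

/-- Green's relation `H = R ∩ L`. -/
def greenH {M : Type*} (mul : M → M → M) (x y : M) : Prop :=
  greenR mul x y ∧ greenL mul x y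

/-- Green's relation `D = R ∘ L`. -/
def greenD {M : Type*} (mul : M → M → M) (x y : M) : Prop :=
  ∃ z, greenR mul x z ∧ greenL mul z y

/-- `pd(α,β)` satisfies `P`, where `α` has `p` transversals: there are representatives
`a s` of the upper parts of the `p` (pairwise distinct) transversals of `α`, with `b s`
representing the corresponding lower parts, and a permutation `π` with `P π` such that the
block of `β` containing `a s` contains `b (π s)`.  (For H-related `α, β ∈ D_p` this says
exactly that some representation of the permutational difference `pd(α,β)` satisfies `P`.) -/
def pdIn (p : ℕ) (P : Equiv.Perm (Fin p) → Prop) (α β : PM n) : Prop :=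
  ∃ (a b : Fin p → Fin n) (π : Equiv.Perm (Fin p)),
    (∀ s t, α.r (Sum.inl (a s)) (Sum.inl (a t)) → s = t) ∧
    (∀ s, α.r (Sum.inl (a s)) (Sum.inr (b s))) ∧
    (∀ s, β.r (Sum.inl (a s)) (Sum.inr (b (π s)))) ∧
    P π

/-- The relation `ν_N` on `D_p`, for a subgroup `N ≤ S_p`:  H-related pairs of rank-`p`
partitions whose permutational difference lies in `N`. -/
def nuRel (p : ℕ) (N : Subgroup (Equiv.Perm (Fin p))) (α β : PM n) : Prop :=
  rnk α = p ∧ rnk β = p ∧ greenH pmul α β ∧ pdIn p (· ∈ N) α β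

/-- The congruence `(m, m+d)^♯` on the additive monoid `ℕ` (intended for `d ≥ 1`). -/
def natCong (m d : ℕ) (i j : ℕ) : Prop :=
  i = j ∨ (m ≤ i ∧ m ≤ j ∧ i % d = j % d)

/-- `min θ ≤ i` for a congruence `θ` on `ℕ` (with `min Δ_ℕ = ∞`). -/
def minLE (θ : ℕ → ℕ → Prop) (i : ℕ) : Prop :=
  ∃ a b, θ a b ∧ a ≠ b ∧ a ≤ i

/-- `k ≤ min θ` for a congruence `θ` on `ℕ` (with `min Δ_ℕ = ∞`). -/
def leMin (k : ℕ) (θ : ℕ → ℕ → Prop) : Prop :=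
  ∀ a b, θ a b → a ≠ b → k ≤ a

/-- The possible entries of a C-matrix. -/
inductive CEntry : Type
  | delta | muUp | muDown | mu | lam | rho | R
  | nsym (q : ℕ) (N : Subgroup (Equiv.Perm (Fin q)))

/-- Whether a C-matrix entry is an N-symbol. -/
def isNsym : CEntry → Prop
  | CEntry.nsym _ _ => True
  | _ => False

/-- The allowed values of the symbol `ζ` in row types RT2, RT5, RT6. -/
def isZeta (e : CEntry) : Prop :=
  e = CEntry.mu ∨ e = CEntry.muUp ∨ e = CEntry.muDown ∨ e = CEntry.delta

/-- The allowed values of the symbol `ξ` in row types RT4–RT7: any of `μ,ρ,λ,R` if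
`d = 1`, and only `μ` if `d > 1`. -/
def xiOK (d : ℕ) (e : CEntry) : Prop :=
  e = CEntry.mu ∨ (d = 1 ∧ (e = CEntry.rho ∨ e = CEntry.lam ∨ e = CEntry.R))

/-- Row type RT1 for rows 0 and 1: all entries `Δ`. -/
def RT1 (M0 M1 : ℕ → CEntry) : Prop :=
  (∀ i, M0 i = CEntry.delta) ∧ (∀ i, M1 i = CEntry.delta)

/-- Row type RT2. -/
def RT2 (Θ0 Θ1 : ℕ → ℕ → Prop) (M0 M1 : ℕ → CEntry) : Prop :=
  Θ0 = Eq ∧ Θ1 = Eq ∧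
  ∃ i ζ, isZeta ζ ∧
    (∀ j, j < i → M0 j = CEntry.delta) ∧ (∀ j, i ≤ j → M0 j = CEntry.mu) ∧
    (∀ j, j < i → M1 j = CEntry.delta) ∧ M1 i = ζ ∧ (∀ j, i < j → M1 j = CEntry.mu)

/-- Row type RT3. -/
def RT3 (Θ0 : ℕ → ℕ → Prop) (M0 M1 : ℕ → CEntry) : Prop :=
  ∃ m ξ, Θ0 = natCong m 1 ∧ (ξ = CEntry.rho ∨ ξ = CEntry.lam ∨ ξ = CEntry.R) ∧
    (∀ i, M1 i = CEntry.delta) ∧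
    (∀ j, j < m → M0 j = CEntry.delta) ∧ (∀ j, m ≤ j → M0 j = ξ)

/-- Row type RT4. -/
def RT4 (Θ0 Θ1 : ℕ → ℕ → Prop) (M0 M1 : ℕ → CEntry) : Prop :=
  ∃ m d ξ, 1 ≤ d ∧ Θ0 = natCong m d ∧ Θ1 = natCong m d ∧ xiOK d ξ ∧
    (∀ j, j < m → M0 j = CEntry.delta ∧ M1 j = CEntry.delta) ∧
    (∀ j, m ≤ j → M0 j = ξ ∧ M1 j = ξ)

/-- Row type RT5. -/
def RT5 (Θ0 Θ1 : ℕ → ℕ → Prop) (M0 M1 : ℕ → CEntry) : Prop :=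
  ∃ m d i ξ ζ, 1 ≤ d ∧ i < m ∧ Θ0 = natCong m d ∧ Θ1 = natCong (m + 1) d ∧
    xiOK d ξ ∧ isZeta ζ ∧
    (∀ j, j < i → M0 j = CEntry.delta) ∧ (∀ j, i ≤ j → j < m → M0 j = CEntry.mu) ∧
    (∀ j, m ≤ j → M0 j = ξ) ∧
    (∀ j, j < i → M1 j = CEntry.delta) ∧ M1 i = ζ ∧
    (∀ j, i < j → j ≤ m → M1 j = CEntry.mu) ∧ (∀ j, m < j → M1 j = ξ)

/-- Row type RT6. -/
def RT6 (Θ0 Θ1 : ℕ → ℕ → Prop) (M0 M1 : ℕ → CEntry) : Prop :=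
  ∃ m l d ξ ζ, 1 ≤ d ∧ m < l ∧ Θ0 = natCong m d ∧ Θ1 = natCong l d ∧
    xiOK d ξ ∧ isZeta ζ ∧
    (∀ j, j < m → M0 j = CEntry.delta) ∧ (∀ j, m ≤ j → M0 j = ξ) ∧
    (∀ j, j < l - 1 → M1 j = CEntry.delta) ∧ M1 (l - 1) = ζ ∧ (∀ j, l ≤ j → M1 j = ξ)

/-- Row type RT7. -/
def RT7 (Θ0 Θ1 : ℕ → ℕ → Prop) (M0 M1 : ℕ → CEntry) : Prop :=
  ∃ m l d ξ, 1 ≤ d ∧ 0 < m ∧ m + 1 < l ∧ (l - 1) % d = m % d ∧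
    Θ0 = natCong m d ∧ Θ1 = natCong l d ∧ xiOK d ξ ∧
    (∀ j, j < m - 1 → M0 j = CEntry.delta) ∧ M0 (m - 1) = CEntry.mu ∧
    (∀ j, m ≤ j → M0 j = ξ) ∧
    (∀ j, j < l - 1 → M1 j = CEntry.delta) ∧ M1 (l - 1) = CEntry.mu ∧
    (∀ j, l ≤ j → M1 j = ξ)

/-- Row type RT8 for a row `q ≥ 2`: all entries `Δ`. -/
def RT8 (Mq : ℕ → CEntry) : Prop := ∀ i, Mq i = CEntry.delta

/-- Row type RT9 for a row `q ≥ 2`. -/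
def RT9 (q : ℕ) (Θq : ℕ → ℕ → Prop) (Mq : ℕ → CEntry) : Prop :=
  ∃ (i k : ℕ) (Ns : ℕ → Subgroup (Equiv.Perm (Fin q))),
    i ≤ k ∧ leMin k Θq ∧
    (∀ j, i ≤ j → j ≤ k → Ns j ≠ ⊥ ∧ (Ns j).Normal) ∧
    (∀ j j', i ≤ j → j ≤ j' → j' ≤ k → Ns j ≤ Ns j') ∧
    (∀ j, j < i → Mq j = CEntry.delta) ∧
    (∀ j, i ≤ j → j < k → Mq j = CEntry.nsym q (Ns j)) ∧
    (∀ j, k ≤ j → Mq j = CEntry.nsym q (Ns k))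

/-- Row type RT10 for a row `q ≥ 2`. -/
def RT10 (q : ℕ) (Θq : ℕ → ℕ → Prop) (Mq : ℕ → CEntry) : Prop :=
  ∃ (i m : ℕ) (Ns : ℕ → Subgroup (Equiv.Perm (Fin q))),
    i ≤ m ∧ Θq = natCong m 1 ∧
    (∀ j, i ≤ j → j < m → Ns j ≠ ⊥ ∧ (Ns j).Normal) ∧
    (∀ j j', i ≤ j → j ≤ j' → j' < m → Ns j ≤ Ns j') ∧
    (∀ j, j < i → Mq j = CEntry.delta) ∧
    (∀ j, i ≤ j → j < m → Mq j = CEntry.nsym q (Ns j)) ∧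
    (∀ j, m ≤ j → Mq j = CEntry.R)

/-- A C-pair for `P_n^Φ`: a descending chain `Θ = (θ_0 ⊇ ⋯ ⊇ θ_n)` of congruences on
`(ℕ,+)` together with a matrix `M = (M_{qi})`, `0 ≤ q ≤ n`, `i ∈ ℕ`, whose rows 0 and 1
jointly have one of the types RT1–RT7, whose rows `q ≥ 2` have one of the types RT8–RT10,
and which satisfies the verticality conditions (V1) and (V2). -/
def IsCPair (n : ℕ) (Θ : ℕ → ℕ → ℕ → Prop) (M : ℕ → ℕ → CEntry) : Prop :=
  (∀ q, q ≤ n → IsCongruence (· + ·) (Θ q)) ∧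
  (∀ q r, q ≤ r → r ≤ n → ∀ i j, Θ r i j → Θ q i j) ∧
  (RT1 (M 0) (M 1) ∨ RT2 (Θ 0) (Θ 1) (M 0) (M 1) ∨ RT3 (Θ 0) (M 0) (M 1) ∨
    RT4 (Θ 0) (Θ 1) (M 0) (M 1) ∨ RT5 (Θ 0) (Θ 1) (M 0) (M 1) ∨
    RT6 (Θ 0) (Θ 1) (M 0) (M 1) ∨ RT7 (Θ 0) (Θ 1) (M 0) (M 1)) ∧
  (∀ q, 2 ≤ q → q ≤ n → (RT8 (M q) ∨ RT9 q (Θ q) (M q) ∨ RT10 q (Θ q) (M q))) ∧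
  (∀ q i, 1 ≤ q → q ≤ n → isNsym (M q i) →
    ¬(M (q - 1) i = CEntry.delta ∨ M (q - 1) i = CEntry.muUp ∨
      M (q - 1) i = CEntry.muDown ∨ isNsym (M (q - 1) i))) ∧
  (∀ q i, 2 ≤ q → q ≤ n → M q i = CEntry.R → M (q - 1) i = CEntry.R)

/-- The relation `cg(Θ,M)` on `P_n^Φ` associated with a C-pair `(Θ,M)`: conditions
(C1)–(C8). -/
def cg (n : ℕ) (Θ : ℕ → ℕ → ℕ → Prop) (M : ℕ → ℕ → CEntry)
    (a b : ℕ × PM n) : Prop :=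
  -- (C1)
  (M (rnk a.2) a.1 = CEntry.delta ∧ M (rnk b.2) b.1 = CEntry.delta ∧
    Θ (rnk a.2) a.1 b.1 ∧ a.2 = b.2) ∨
  -- (C2)
  (M (rnk a.2) a.1 = CEntry.R ∧ M (rnk b.2) b.1 = CEntry.R) ∨
  -- (C3)
  (∃ p N, M (rnk a.2) a.1 = CEntry.nsym p N ∧ M (rnk b.2) b.1 = CEntry.nsym p N ∧
    Θ (rnk a.2) a.1 b.1 ∧ rnk a.2 = p ∧ greenH pmul a.2 b.2 ∧ pdIn p (· ∈ N) a.2 b.2) ∨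
  -- (C4)
  (M (rnk a.2) a.1 = CEntry.lam ∧ M (rnk b.2) b.1 = CEntry.lam ∧
    greenL pmul (hat a.2) (hat b.2)) ∨
  -- (C5)
  (M (rnk a.2) a.1 = CEntry.rho ∧ M (rnk b.2) b.1 = CEntry.rho ∧
    greenR pmul (hat a.2) (hat b.2)) ∨
  -- (C6)
  (M (rnk a.2) a.1 = CEntry.muDown ∧ M (rnk b.2) b.1 = CEntry.muDown ∧
    hat a.2 = hat b.2 ∧ greenL pmul a.2 b.2) ∨
  -- (C7)
  (M (rnk a.2) a.1 = CEntry.muUp ∧ M (rnk b.2) b.1 = CEntry.muUp ∧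
    hat a.2 = hat b.2 ∧ greenR pmul a.2 b.2) ∨
  -- (C8)
  (M (rnk a.2) a.1 = CEntry.mu ∧ M (rnk b.2) b.1 = CEntry.mu ∧
    hat a.2 = hat b.2 ∧
    ((rnk a.2 = rnk b.2 ∧ Θ (rnk a.2) a.1 b.1) ∨
     (rnk a.2 ≠ rnk b.2 ∧ Θ 0 (a.1 + rnk b.2) (b.1 + rnk a.2) ∧
        ¬ minLE (Θ (rnk a.2)) a.1 ∧ ¬ minLE (Θ (rnk b.2)) b.1) ∨
     (rnk a.2 ≠ rnk b.2 ∧ Θ 0 (a.1 + rnk b.2) (b.1 + rnk a.2) ∧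
        minLE (Θ (rnk a.2)) a.1 ∧ minLE (Θ (rnk b.2)) b.1)))

/-- The C-pair `(Θ,M)` is exceptional with exceptional row `q`, where
`θ_q = (m, m+2d)^♯`. -/
def ExcAt (n : ℕ) (Θ : ℕ → ℕ → ℕ → Prop) (M : ℕ → ℕ → CEntry) (q m d : ℕ) : Prop :=
  2 ≤ q ∧ q ≤ n ∧ 1 ≤ d ∧ Θ q = natCong m (2 * d) ∧
  ((2 < q ∧ M q m = CEntry.nsym q (alternatingGroup (Fin q))) ∨
   (q = 2 ∧ M 2 m = CEntry.delta ∧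
     (M 1 m = CEntry.mu ∨ M 1 m = CEntry.rho ∨ M 1 m = CEntry.lam ∨ M 1 m = CEntry.R) ∧
     (∀ i j, natCong m d i j → Θ 1 i j)))

/-- The exceptional congruence `cgx(Θ,M)` associated with an exceptional C-pair:
`cg(Θ,M)` together with the pairs of (C9). -/
def cgx (n : ℕ) (Θ : ℕ → ℕ → ℕ → Prop) (M : ℕ → ℕ → CEntry) (q m d : ℕ)
    (a b : ℕ × PM n) : Prop :=
  cg n Θ M a b ∨
  (rnk a.2 = q ∧ rnk b.2 = q ∧ natCong m d a.1 b.1 ∧ ¬ Θ q a.1 b.1 ∧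
    greenH pmul a.2 b.2 ∧ pdIn q (fun π => π ∉ alternatingGroup (Fin q)) a.2 b.2)

/-- The Rees relation of a subset `I`. -/
def rees {M : Type*} (I : Set M) (x y : M) : Prop := x = y ∨ (x ∈ I ∧ y ∈ I)

/-- A (possibly empty) ideal of `P_n^Φ`: `MIM ⊆ I`. -/
def tIdeal (n : ℕ) (I : Set (ℕ × PM n)) : Prop :=
  ∀ a b x, x ∈ I → tmul (tmul a x) b ∈ I

/-- `I(σ)`: the union of all ideals `I` of `P_n^Φ` whose Rees congruence is contained
in `σ`. -/
def Isig (n : ℕ) (σ : (ℕ × PM n) → (ℕ × PM n) → Prop) : Set (ℕ × PM n) :=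
  ⋃₀ {I | tIdeal n I ∧ ∀ x y, rees I x y → σ x y}

/-- The 0-twisted partition monoid `P_{n,0}^Φ`, carried by `Option (P_n)` with
`none` the zero element `✗`. -/
noncomputable def mul0 (a b : Option (PM n)) : Option (PM n) :=
  match a, b with
  | some α, some β => if Phi α β = 0 then some (pmul α β) else none
  | _, _ => none

/-- `rank a ≤ q`, where `rank ✗ = -∞`. -/
def rnkLE (a : Option (PM n)) (q : ℕ) : Prop :=
  ∀ α, a = some α → rnk α ≤ q

/-- The Rees congruence `R_q` on `P_{n,0}^Φ`. -/
def ReesQ (q : ℕ) (a b : Option (PM n)) : Prop :=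
  a = b ∨ (rnkLE a q ∧ rnkLE b q)

/-- Lift a relation on `P_n` to `P_{n,0}^Φ = P_n ∪ {✗}`. -/
def lift2 (r : PM n → PM n → Prop) (a b : Option (PM n)) : Prop :=
  ∃ α β, a = some α ∧ b = some β ∧ r α β


/-! ### Auxiliary development -/

section Aux
set_option linter.unreachableTactic false
set_option linter.unusedTactic false

open Sum

/-- Top row vertex. -/
abbrev wt (i : Fin n) : W n := Sum.inl i
/-- Middle row vertex. -/
abbrev wm (i : Fin n) : W n := Sum.inr (Sum.inl i)
/-- Bottom row vertex. -/
abbrev wb (i : Fin n) : W n := Sum.inr (Sum.inr i)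

/-- Upper-row relation of a partition. -/
def upS (α : PM n) : Setoid (Fin n) :=
  ⟨fun i j => α.r (Sum.inl i) (Sum.inl j),
   ⟨fun _ => α.iseqv.refl _, fun h => α.iseqv.symm h, fun h h' => α.iseqv.trans h h'⟩⟩

/-- Lower-row relation of a partition. -/
def loS (α : PM n) : Setoid (Fin n) :=
  ⟨fun i j => α.r (Sum.inr i) (Sum.inr j),
   ⟨fun _ => α.iseqv.refl _, fun h => α.iseqv.symm h, fun h h' => α.iseqv.trans h h'⟩⟩

/-- Cross relation of a partition. -/
def crs (α : PM n) (i j : Fin n) : Prop := α.r (Sum.inl i) (Sum.inr j)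

/-- Rank-one partition with upper part `P`, lower part `Q`, and the
transversal joining the class of `a` to the class of `b`. -/
def mk1 (P Q : Setoid (Fin n)) (a b : Fin n) : PM n :=
  ⟨fun x y => match x, y with
    | Sum.inl i, Sum.inl j => P.r i j
    | Sum.inr i, Sum.inr j => Q.r i j
    | Sum.inl i, Sum.inr j => P.r i a ∧ Q.r j b
    | Sum.inr i, Sum.inl j => P.r j a ∧ Q.r i b, by
    constructor
    · rintro (i | i)
      · exact P.iseqv.refl i
      · exact Q.iseqv.refl i
    · rintro (i | i) (j | j) h <;> simp only [] at h ⊢ <;>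
        first
          | exact P.iseqv.symm h
          | exact Q.iseqv.symm h
          | exact ⟨h.1, h.2⟩
    · rintro (i | i) (j | j) (k | k) h h' <;> simp only [] at h h' ⊢ <;>
        first
          | exact P.iseqv.trans h h'
          | exact Q.iseqv.trans h h'
          | exact ⟨h.1, h'.2⟩
          | exact ⟨h'.1, h.2⟩
          | exact ⟨P.iseqv.trans h h'.1, h'.2⟩
          | exact ⟨h.1, Q.iseqv.trans (Q.iseqv.symm h') h.2⟩
          | exact ⟨h'.1, Q.iseqv.trans (Q.iseqv.symm h) h'.2⟩
          | exact ⟨P.iseqv.trans (P.iseqv.symm h') h.1, h.2⟩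
          | exact ⟨h.1, Q.iseqv.trans h' h.2⟩
          | exact ⟨h'.1, Q.iseqv.trans h h'.2⟩
          | exact P.iseqv.trans h.1 (P.iseqv.symm h'.1)
          | exact Q.iseqv.trans h.2 (Q.iseqv.symm h'.2)⟩

/-- Rank-zero partition with upper part `P` and lower part `Q`. -/
def mk0 (P Q : Setoid (Fin n)) : PM n :=
  ⟨fun x y => match x, y with
    | Sum.inl i, Sum.inl j => P.r i j
    | Sum.inr i, Sum.inr j => Q.r i j
    | Sum.inl _, Sum.inr _ => False
    | Sum.inr _, Sum.inl _ => False, by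
    constructor
    · rintro (i | i)
      · exact P.iseqv.refl i
      · exact Q.iseqv.refl i
    · rintro (i | i) (j | j) h <;> simp only [] at h ⊢ <;>
        first
          | exact P.iseqv.symm h
          | exact Q.iseqv.symm h
          | exact h
    · rintro (i | i) (j | j) (k | k) h h' <;> simp only [] at h h' ⊢ <;>
        first
          | exact P.iseqv.trans h h'
          | exact Q.iseqv.trans h h'
          | exact h
          | exact h'
          | exact h.elim
          | exact h'.elim⟩

@[simp] lemma mk1_ll {P Q : Setoid (Fin n)} {a b i j : Fin n} :
    (mk1 P Q a b).r (Sum.inl i) (Sum.inl j) ↔ P.r i j := Iff.rfl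
@[simp] lemma mk1_rr {P Q : Setoid (Fin n)} {a b i j : Fin n} :
    (mk1 P Q a b).r (Sum.inr i) (Sum.inr j) ↔ Q.r i j := Iff.rfl
@[simp] lemma mk1_lr {P Q : Setoid (Fin n)} {a b i j : Fin n} :
    (mk1 P Q a b).r (Sum.inl i) (Sum.inr j) ↔ P.r i a ∧ Q.r j b := Iff.rfl
@[simp] lemma mk1_rl {P Q : Setoid (Fin n)} {a b i j : Fin n} :
    (mk1 P Q a b).r (Sum.inr i) (Sum.inl j) ↔ P.r j a ∧ Q.r i b := Iff.rfl
@[simp] lemma mk0_ll {P Q : Setoid (Fin n)} {i j : Fin n} :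
    (mk0 P Q).r (Sum.inl i) (Sum.inl j) ↔ P.r i j := Iff.rfl
@[simp] lemma mk0_rr {P Q : Setoid (Fin n)} {i j : Fin n} :
    (mk0 P Q).r (Sum.inr i) (Sum.inr j) ↔ Q.r i j := Iff.rfl
@[simp] lemma mk0_lr {P Q : Setoid (Fin n)} {i j : Fin n} :
    (mk0 P Q).r (Sum.inl i) (Sum.inr j) ↔ False := Iff.rfl
@[simp] lemma mk0_rl {P Q : Setoid (Fin n)} {i j : Fin n} :
    (mk0 P Q).r (Sum.inr i) (Sum.inl j) ↔ False := Iff.rfl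

lemma rel_of_pm_eq {α β : PM n} (h : α = β) : ∀ x y, α.r x y ↔ β.r x y := by
  subst h; exact fun _ _ => Iff.rfl

lemma mk1_congr {P Q : Setoid (Fin n)} {a b a' b' : Fin n}
    (ha : P.r a a') (hb : Q.r b b') : mk1 P Q a b = mk1 P Q a' b' := by
  apply Setoid.ext
  rintro (i | i) (j | j) <;>
    simp only [mk1_ll, mk1_rr, mk1_lr, mk1_rl] <;>
    constructor <;> rintro ⟨h1, h2⟩ <;>
    exact ⟨P.iseqv.trans h1 (by first | exact ha | exact P.iseqv.symm ha),
           Q.iseqv.trans h2 (by first | exact hb | exact Q.iseqv.symm hb)⟩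

end Aux
section Conn
set_option linter.unreachableTactic false
set_option linter.unusedTactic false

variable {α β : PM n}

lemma conn_refl (x : W n) : conn α β x x := Relation.EqvGen.refl x
lemma conn_symm {x y : W n} (h : conn α β x y) : conn α β y x := Relation.EqvGen.symm x y h
lemma conn_trans {x y z : W n} (h : conn α β x y) (h' : conn α β y z) : conn α β x z :=
  Relation.EqvGen.trans x y z h h'

lemma conn_tt {i j : Fin n} (h : α.r (Sum.inl i) (Sum.inl j)) : conn α β (wt i) (wt j) :=
  Relation.EqvGen.rel _ _ (Or.inl ⟨Sum.inl i, Sum.inl j, h, rfl, rfl⟩)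
lemma conn_tm {i j : Fin n} (h : α.r (Sum.inl i) (Sum.inr j)) : conn α β (wt i) (wm j) :=
  Relation.EqvGen.rel _ _ (Or.inl ⟨Sum.inl i, Sum.inr j, h, rfl, rfl⟩)
lemma conn_mma {i j : Fin n} (h : α.r (Sum.inr i) (Sum.inr j)) : conn α β (wm i) (wm j) :=
  Relation.EqvGen.rel _ _ (Or.inl ⟨Sum.inr i, Sum.inr j, h, rfl, rfl⟩)
lemma conn_mmb {i j : Fin n} (h : β.r (Sum.inl i) (Sum.inl j)) : conn α β (wm i) (wm j) :=
  Relation.EqvGen.rel _ _ (Or.inr ⟨Sum.inl i, Sum.inl j, h, rfl, rfl⟩)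
lemma conn_mb {i j : Fin n} (h : β.r (Sum.inl i) (Sum.inr j)) : conn α β (wm i) (wb j) :=
  Relation.EqvGen.rel _ _ (Or.inr ⟨Sum.inl i, Sum.inr j, h, rfl, rfl⟩)
lemma conn_bb {i j : Fin n} (h : β.r (Sum.inr i) (Sum.inr j)) : conn α β (wb i) (wb j) :=
  Relation.EqvGen.rel _ _ (Or.inr ⟨Sum.inr i, Sum.inr j, h, rfl, rfl⟩)

/-- Characterisation of connectivity via an explicit equivalence relation. -/
lemma conn_iff (S : W n → W n → Prop) (hS : Equivalence S)
    (hedge : ∀ x y, graphRel α β x y → S x y)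
    (hback : ∀ x y, S x y → conn α β x y) {x y : W n} :
    conn α β x y ↔ S x y := by
  constructor
  · intro h
    induction h with
    | rel x y h => exact hedge x y h
    | refl x => exact hS.refl x
    | symm x y _ ih => exact hS.symm ih
    | trans x y z _ _ ih1 ih2 => exact hS.trans ih1 ih2
  · exact hback x y

/-- One-directional bound on connectivity. -/
lemma conn_le (S : W n → W n → Prop) (hS : Equivalence S)
    (hedge : ∀ x y, graphRel α β x y → S x y) {x y : W n} :
    conn α β x y → S x y := by
  intro h
  induction h with
  | rel x y h => exact hedge x y h
  | refl x => exact hS.refl x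
  | symm x y _ ih => exact hS.symm ih
  | trans x y z _ _ ih1 ih2 => exact hS.trans ih1 ih2

end Conn

section Rank
set_option linter.unreachableTactic false
set_option linter.unusedTactic false

lemma rnk_eq_one_iff {α : PM n} :
    rnk α = 1 ↔ (∃ a b, crs α a b) ∧
      (∀ a b a' b', crs α a b → crs α a' b' → α.r (Sum.inl a) (Sum.inl a')) := by
  constructor
  · intro h
    rw [rnk, Nat.card_eq_one_iff_unique] at h
    obtain ⟨hsub, ⟨⟨c, ⟨a, ha⟩, ⟨b, hb⟩⟩⟩⟩ := h
    have hab : crs α a b := Quotient.exact (ha.trans hb.symm)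
    refine ⟨⟨a, b, hab⟩, ?_⟩
    intro a₁ b₁ a₂ b₂ h1 h2
    have e1 : (⟨Quotient.mk α (Sum.inl a₁), ⟨a₁, rfl⟩, ⟨b₁, Quotient.sound (α.iseqv.symm h1)⟩⟩ :
        {c : Quotient α // (∃ i : Fin n, Quotient.mk α (Sum.inl i) = c) ∧
          ∃ i : Fin n, Quotient.mk α (Sum.inr i) = c}) =
        ⟨Quotient.mk α (Sum.inl a₂), ⟨a₂, rfl⟩, ⟨b₂, Quotient.sound (α.iseqv.symm h2)⟩⟩ :=
      hsub.allEq _ _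
    have := congrArg Subtype.val e1
    exact Quotient.exact this
  · rintro ⟨⟨a, b, hab⟩, huniq⟩
    rw [rnk, Nat.card_eq_one_iff_unique]
    constructor
    · constructor
      rintro ⟨c, ⟨a₁, ha₁⟩, ⟨b₁, hb₁⟩⟩ ⟨c', ⟨a₂, ha₂⟩, ⟨b₂, hb₂⟩⟩
      have h1 : crs α a₁ b₁ := Quotient.exact (ha₁.trans hb₁.symm)
      have h2 : crs α a₂ b₂ := Quotient.exact (ha₂.trans hb₂.symm)
      apply Subtype.ext
      calc c = Quotient.mk α (Sum.inl a₁) := ha₁.symm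
        _ = Quotient.mk α (Sum.inl a₂) := Quotient.sound (huniq _ _ _ _ h1 h2)
        _ = c' := ha₂
    · exact ⟨⟨Quotient.mk α (Sum.inl a), ⟨a, rfl⟩, ⟨b, Quotient.sound (α.iseqv.symm hab)⟩⟩⟩

lemma rnk_eq_zero_iff {α : PM n} : rnk α = 0 ↔ ∀ a b, ¬ crs α a b := by
  constructor
  · intro h a b hab
    have : Nonempty {c : Quotient α // (∃ i : Fin n, Quotient.mk α (Sum.inl i) = c) ∧
        ∃ i : Fin n, Quotient.mk α (Sum.inr i) = c} :=
      ⟨⟨Quotient.mk α (Sum.inl a), ⟨a, rfl⟩, ⟨b, Quotient.sound (α.iseqv.symm hab)⟩⟩⟩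
    have hf : (Nat.card {c : Quotient α // (∃ i : Fin n, Quotient.mk α (Sum.inl i) = c) ∧
        ∃ i : Fin n, Quotient.mk α (Sum.inr i) = c}) ≠ 0 := by
      have : Finite (Quotient α) := Quotient.finite _
      have : Finite {c : Quotient α // (∃ i : Fin n, Quotient.mk α (Sum.inl i) = c) ∧
          ∃ i : Fin n, Quotient.mk α (Sum.inr i) = c} := Subtype.finite
      simp [Nat.card_ne_zero, *]
    exact hf h
  · intro h
    rw [rnk]
    have : IsEmpty {c : Quotient α // (∃ i : Fin n, Quotient.mk α (Sum.inl i) = c) ∧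
        ∃ i : Fin n, Quotient.mk α (Sum.inr i) = c} := by
      constructor
      rintro ⟨c, ⟨a, ha⟩, ⟨b, hb⟩⟩
      exact h a b (Quotient.exact (ha.trans hb.symm))
    exact Nat.card_of_isEmpty

lemma rnk_mk1 (P Q : Setoid (Fin n)) (a b : Fin n) : rnk (mk1 P Q a b) = 1 := by
  rw [rnk_eq_one_iff]
  refine ⟨⟨a, b, ⟨P.iseqv.refl a, Q.iseqv.refl b⟩⟩, ?_⟩
  rintro a₁ b₁ a₂ b₂ ⟨h1, _⟩ ⟨h2, _⟩
  exact P.iseqv.trans h1 (P.iseqv.symm h2)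

lemma rnk_mk0 (P Q : Setoid (Fin n)) : rnk (mk0 P Q) = 0 := by
  rw [rnk_eq_zero_iff]; intro a b h; exact h

/-- Structure of a rank-one partition. -/
lemma rank1_struct {α : PM n} (h : rnk α = 1) :
    ∃ a b, α = mk1 (upS α) (loS α) a b := by
  rw [rnk_eq_one_iff] at h
  obtain ⟨⟨a, b, hab⟩, huniq⟩ := h
  refine ⟨a, b, Setoid.ext ?_⟩
  have key : ∀ i j, crs α i j ↔ (α.r (Sum.inl i) (Sum.inl a) ∧ α.r (Sum.inr j) (Sum.inr b)) := by
    intro i j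
    constructor
    · intro hij
      have h1 := huniq _ _ _ _ hij hab
      refine ⟨h1, ?_⟩
      have : α.r (Sum.inr j) (Sum.inl a) :=
        α.iseqv.trans (α.iseqv.symm hij) h1
      exact α.iseqv.trans this hab
    · rintro ⟨h1, h2⟩
      exact α.iseqv.trans (α.iseqv.trans h1 hab) (α.iseqv.symm h2)
  rintro (i | i) (j | j)
  · exact Iff.rfl
  · exact key i j
  · constructor
    · intro hij
      exact (key j i).mp (α.iseqv.symm hij)
    · rintro ⟨h1, h2⟩
      exact α.iseqv.symm ((key j i).mpr ⟨h1, h2⟩)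
  · exact Iff.rfl

end Rank
section Sep
set_option linter.unreachableTactic false
set_option linter.unusedTactic false

/-- `optr Qt o j`: `o = some c` with `j` in the class of `c`. -/
def optr (Qt : Setoid (Fin n)) (o : Option (Fin n)) (j : Fin n) : Prop :=
  ∃ c, o = some c ∧ Qt.r j c

lemma optr_some {Qt : Setoid (Fin n)} {c j : Fin n} : optr Qt (some c) j ↔ Qt.r j c := by
  constructor
  · rintro ⟨d, hd, h⟩; cases Option.some_inj.mp hd; exact h
  · intro h; exact ⟨c, rfl, h⟩

lemma optr_none {Qt : Setoid (Fin n)} {j : Fin n} : ¬ optr Qt none j := by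
  rintro ⟨d, hd, _⟩; exact nomatch hd

lemma optr_mono {Qt : Setoid (Fin n)} {o : Option (Fin n)} {j k : Fin n}
    (h : optr Qt o j) (hk : Qt.r j k) : optr Qt o k := by
  obtain ⟨c, hc, h⟩ := h; exact ⟨c, hc, Qt.iseqv.trans (Qt.iseqv.symm hk) h⟩

/-- Cross relation of the `sep` family. -/
def sepcr (U : Fin n → Prop) (Qt : Setoid (Fin n)) (oc oc' : Option (Fin n))
    (x j : Fin n) : Prop :=
  (U x ∧ optr Qt oc j) ∨ (¬ U x ∧ optr Qt oc' j)

/-- Well-formedness of the data of a `sep` element. -/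
def sepwf (Qt : Setoid (Fin n)) (oc oc' : Option (Fin n)) : Prop :=
  ∀ c c', oc = some c → oc' = some c' → ¬ Qt.r c c'

variable {U : Fin n → Prop} {Qt : Setoid (Fin n)} {oc oc' : Option (Fin n)}

lemma sepcr_mono (h : sepcr U Qt oc oc' x j) (hk : Qt.r j k) : sepcr U Qt oc oc' x k := by
  rcases h with ⟨h1, h2⟩ | ⟨h1, h2⟩
  · exact Or.inl ⟨h1, optr_mono h2 hk⟩
  · exact Or.inr ⟨h1, optr_mono h2 hk⟩

lemma sepcr_side (hwf : sepwf Qt oc oc')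
    (h : sepcr U Qt oc oc' x j) (h' : sepcr U Qt oc oc' y j) : (U x ↔ U y) := by
  rcases h with ⟨h1, c, hc, h2⟩ | ⟨h1, c, hc, h2⟩ <;>
    rcases h' with ⟨g1, d, hd, g2⟩ | ⟨g1, d, hd, g2⟩ <;>
    first
      | exact iff_of_true h1 g1
      | exact iff_of_false h1 g1
      | exact absurd (Qt.iseqv.trans (Qt.iseqv.symm h2) g2) (hwf _ _ hc hd)
      | exact absurd (Qt.iseqv.trans (Qt.iseqv.symm g2) h2) (hwf _ _ hc hd)
      | exact absurd (Qt.iseqv.trans (Qt.iseqv.symm h2) g2) (hwf _ _ hd hc)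
      | exact absurd (Qt.iseqv.trans (Qt.iseqv.symm g2) h2) (hwf _ _ hd hc)

lemma sepcr_of_side (h : sepcr U Qt oc oc' x j) (hxy : U x ↔ U y) : sepcr U Qt oc oc' y j := by
  rcases h with ⟨h1, h2⟩ | ⟨h1, h2⟩
  · exact Or.inl ⟨hxy.mp h1, h2⟩
  · exact Or.inr ⟨fun hy => h1 (hxy.mpr hy), h2⟩

lemma sepcr_bot (h : sepcr U Qt oc oc' x j) (h' : sepcr U Qt oc oc' x k) : Qt.r j k := by
  rcases h with ⟨h1, c, hc, h2⟩ | ⟨h1, c, hc, h2⟩ <;>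
    rcases h' with ⟨g1, d, hd, g2⟩ | ⟨g1, d, hd, g2⟩ <;>
    first
      | (cases hc.symm.trans hd; exact Qt.iseqv.trans h2 (Qt.iseqv.symm g2))
      | exact absurd h1 g1
      | exact absurd g1 h1

/-- The `sep` family of multipliers: upper row split into `U` and its complement,
lower row `Qt`, with the `U`-side joined to `oc` and the other side to `oc'`. -/
def sep (U : Fin n → Prop) (Qt : Setoid (Fin n)) (oc oc' : Option (Fin n))
    (hwf : sepwf Qt oc oc') : PM n :=
  ⟨fun x y => match x, y with
    | Sum.inl x, Sum.inl y => U x ↔ U y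
    | Sum.inr j, Sum.inr k => Qt.r j k
    | Sum.inl x, Sum.inr j => sepcr U Qt oc oc' x j
    | Sum.inr j, Sum.inl x => sepcr U Qt oc oc' x j, by
    constructor
    · rintro (x | j)
      · exact Iff.rfl
      · exact Qt.iseqv.refl j
    · rintro (x | j) (y | k) h <;> simp only [] at h ⊢ <;>
        first
          | exact h.symm
          | exact Qt.iseqv.symm h
          | exact h
    · rintro (x | j) (y | k) (z | l) h h' <;> simp only [] at h h' ⊢ <;>
        first
          | exact h.trans h'
          | exact Qt.iseqv.trans h h'
          | exact sepcr_of_side h' h.symm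
          | exact sepcr_of_side h h'
          | exact sepcr_side hwf h h'
          | exact sepcr_side hwf h' h
          | exact sepcr_mono h h'
          | exact sepcr_mono h (Qt.iseqv.symm h')
          | exact sepcr_mono h' (Qt.iseqv.symm h)
          | exact sepcr_bot h h'
          | exact sepcr_bot h' h⟩

@[simp] lemma sep_ll {hwf : sepwf Qt oc oc'} {x y : Fin n} :
    (sep U Qt oc oc' hwf).r (Sum.inl x) (Sum.inl y) ↔ (U x ↔ U y) := Iff.rfl
@[simp] lemma sep_rr {hwf : sepwf Qt oc oc'} {j k : Fin n} :
    (sep U Qt oc oc' hwf).r (Sum.inr j) (Sum.inr k) ↔ Qt.r j k := Iff.rfl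
@[simp] lemma sep_lr {hwf : sepwf Qt oc oc'} {x j : Fin n} :
    (sep U Qt oc oc' hwf).r (Sum.inl x) (Sum.inr j) ↔ sepcr U Qt oc oc' x j := Iff.rfl
@[simp] lemma sep_rl {hwf : sepwf Qt oc oc'} {x j : Fin n} :
    (sep U Qt oc oc' hwf).r (Sum.inr j) (Sum.inl x) ↔ sepcr U Qt oc oc' x j := Iff.rfl

end Sep
section Char
set_option linter.unreachableTactic false
set_option linter.unusedTactic false

variable {P Q Qt : Setoid (Fin n)} {a b : Fin n} {U : Fin n → Prop} {oc oc' : Option (Fin n)}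

/-- Connectivity pattern for `mk1 P Q a b * sep U Qt oc oc'` when `U` is `Q`-closed. -/
def Sc (P : Setoid (Fin n)) (a b : Fin n) (U : Fin n → Prop) (Qt : Setoid (Fin n))
    (oc oc' : Option (Fin n)) : W n → W n → Prop := fun x y =>
  match x, y with
  | Sum.inl i, Sum.inl j => P.r i j
  | Sum.inl i, Sum.inr (Sum.inl j) => P.r i a ∧ (U j ↔ U b)
  | Sum.inl i, Sum.inr (Sum.inr k) => P.r i a ∧ sepcr U Qt oc oc' b k
  | Sum.inr (Sum.inl j), Sum.inl i => P.r i a ∧ (U j ↔ U b)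
  | Sum.inr (Sum.inl j), Sum.inr (Sum.inl k) => (U j ↔ U k)
  | Sum.inr (Sum.inl j), Sum.inr (Sum.inr k) => sepcr U Qt oc oc' j k
  | Sum.inr (Sum.inr k), Sum.inl i => P.r i a ∧ sepcr U Qt oc oc' b k
  | Sum.inr (Sum.inr k), Sum.inr (Sum.inl j) => sepcr U Qt oc oc' j k
  | Sum.inr (Sum.inr j), Sum.inr (Sum.inr k) => Qt.r j k

lemma Sc_equiv (hwf : sepwf Qt oc oc') :
    Equivalence (Sc P a b U Qt oc oc' (n := n)) := by
  constructor
  · rintro (i | j | k) <;> simp only [Sc] <;>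
      first
        | exact P.iseqv.refl _
        | exact Qt.iseqv.refl _
        | exact Iff.rfl
  · rintro (i | j | k) (i' | j' | k') h <;> simp only [Sc] at h ⊢ <;>
      first
        | exact P.iseqv.symm h
        | exact Qt.iseqv.symm h
        | exact h.symm
        | exact h
  · rintro (i | j | k) (i' | j' | k') (i'' | j'' | k'') h h' <;>
      simp only [Sc] at h h' ⊢ <;>
      first
        | exact P.iseqv.trans h h'
        | exact Qt.iseqv.trans h h'
        | exact h.trans h'
        | exact ⟨P.iseqv.trans h h'.1, h'.2⟩
        | exact P.iseqv.trans h.1 (P.iseqv.symm h'.1)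
        | exact ⟨h.1, h'.symm.trans h.2⟩
        | exact ⟨h.1, sepcr_of_side h' h.2⟩
        | exact ⟨h.1, sepcr_side hwf h' h.2⟩
        | exact ⟨h.1, sepcr_mono h.2 h'⟩
        | exact ⟨P.iseqv.trans (P.iseqv.symm h') h.1, h.2⟩
        | exact h.2.trans h'.2.symm
        | exact sepcr_of_side h'.2 h.2.symm
        | exact ⟨h'.1, h.trans h'.2⟩
        | exact sepcr_of_side h' h.symm
        | exact ⟨h'.1, sepcr_side hwf h h'.2⟩
        | exact sepcr_side hwf h h'
        | exact sepcr_mono h h'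
        | exact sepcr_of_side h.2 h'.2.symm
        | exact sepcr_bot h.2 h'.2
        | exact ⟨h'.1, sepcr_of_side h h'.2⟩
        | exact sepcr_of_side h h'
        | exact sepcr_bot h h'
        | exact ⟨h'.1, sepcr_mono h'.2 (Qt.iseqv.symm h)⟩
        | exact sepcr_mono h' (Qt.iseqv.symm h)

lemma conn_mk1_sep_closed {hwf : sepwf Qt oc oc'}
    (hU : ∀ x y, Q.r x y → (U x ↔ U y)) {x y : W n} :
    conn (mk1 P Q a b) (sep U Qt oc oc' hwf) x y ↔ Sc P a b U Qt oc oc' x y := by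
  apply conn_iff _ (Sc_equiv hwf)
  · rintro x y (⟨u, v, huv, rfl, rfl⟩ | ⟨u, v, huv, rfl, rfl⟩) <;>
      rcases u with i | i <;> rcases v with j | j <;>
      simp only [topMid, midBot, mk1_ll, mk1_rr, mk1_lr, mk1_rl, sep_ll, sep_rr, sep_lr,
        sep_rl] at huv <;> simp only [Sc] <;>
      first
        | exact huv
        | exact ⟨huv.1, hU _ _ huv.2⟩
        | exact hU _ _ huv
  · rintro (i | j | k) (i' | j' | k') h <;> simp only [Sc] at h
    · exact conn_tt h
    · exact conn_trans (conn_tm (show (mk1 P Q a b).r (Sum.inl i) (Sum.inr b) from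
        ⟨h.1, Q.iseqv.refl b⟩)) (conn_mmb (show (U b ↔ U j') from h.2.symm))
    · exact conn_trans (conn_tm (show (mk1 P Q a b).r (Sum.inl i) (Sum.inr b) from
        ⟨h.1, Q.iseqv.refl b⟩)) (conn_mb (show sepcr U Qt oc oc' b k' from h.2))
    · exact conn_symm (conn_trans (conn_tm (show (mk1 P Q a b).r (Sum.inl i') (Sum.inr b) from
        ⟨h.1, Q.iseqv.refl b⟩)) (conn_mmb (show (U b ↔ U j) from h.2.symm)))
    · exact conn_mmb h
    · exact conn_mb h
    · exact conn_symm (conn_trans (conn_tm (show (mk1 P Q a b).r (Sum.inl i') (Sum.inr b) from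
        ⟨h.1, Q.iseqv.refl b⟩)) (conn_mb (show sepcr U Qt oc oc' b k from h.2)))
    · exact conn_symm (conn_mb h)
    · exact conn_bb h

/-- Product formula, closed case, alive (`b`'s side has a cross). -/
lemma pmul_mk1_sep_closed_alive {hwf : sepwf Qt oc oc'}
    (hU : ∀ x y, Q.r x y → (U x ↔ U y)) {c : Fin n}
    (hc : (U b ∧ oc = some c) ∨ (¬ U b ∧ oc' = some c)) :
    pmul (mk1 P Q a b) (sep U Qt oc oc' hwf) = mk1 P Qt a c := by
  apply Setoid.ext
  have hcr : ∀ k, sepcr U Qt oc oc' b k ↔ Qt.r k c := by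
    intro k
    rcases hc with ⟨hb, hoc⟩ | ⟨hb, hoc⟩ <;> subst hoc <;>
      constructor <;> intro h
    · rcases h with ⟨_, h2⟩ | ⟨h1, _⟩
      · exact optr_some.mp h2
      · exact absurd hb h1
    · exact Or.inl ⟨hb, optr_some.mpr h⟩
    · rcases h with ⟨h1, _⟩ | ⟨_, h2⟩
      · exact absurd h1 hb
      · exact optr_some.mp h2
    · exact Or.inr ⟨hb, optr_some.mpr h⟩
  rintro (i | i) (j | j) <;>
    show conn _ _ (topBot _) (topBot _) ↔ _ <;>
    simp only [topBot] <;>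
    rw [conn_mk1_sep_closed hU] <;>
    simp only [Sc, mk1_ll, mk1_rr, mk1_lr, mk1_rl]
  · rw [hcr]
  · rw [hcr]

/-- Product formula, closed case, dead (`b`'s side has no cross). -/
lemma pmul_mk1_sep_closed_dead {hwf : sepwf Qt oc oc'}
    (hU : ∀ x y, Q.r x y → (U x ↔ U y))
    (hc : (U b ∧ oc = none) ∨ (¬ U b ∧ oc' = none)) :
    pmul (mk1 P Q a b) (sep U Qt oc oc' hwf) = mk0 P Qt := by
  apply Setoid.ext
  have hcr : ∀ k, ¬ sepcr U Qt oc oc' b k := by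
    intro k h
    rcases hc with ⟨hb, hoc⟩ | ⟨hb, hoc⟩ <;> subst hoc <;>
      rcases h with ⟨h1, h2⟩ | ⟨h1, h2⟩ <;>
      first
        | exact optr_none h2
        | exact h1 hb
        | exact hb h1
  rintro (i | i) (j | j) <;>
    show conn _ _ (topBot _) (topBot _) ↔ _ <;>
    simp only [topBot] <;>
    rw [conn_mk1_sep_closed hU] <;>
    simp only [Sc, mk0_ll, mk0_rr, mk0_lr, mk0_rl]
  · simp [hcr]
  · simp [hcr]

end Char
section Char2
set_option linter.unreachableTactic false
set_option linter.unusedTactic false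

variable {P Q Qt : Setoid (Fin n)} {a b : Fin n} {U : Fin n → Prop} {oc oc' : Option (Fin n)}

/-- Membership in one of the (at most two) distinguished lower classes of a `sep`. -/
def exr (Qt : Setoid (Fin n)) (oc oc' : Option (Fin n)) (k : Fin n) : Prop :=
  optr Qt oc k ∨ optr Qt oc' k

lemma exr_mono {k l : Fin n} (h : exr Qt oc oc' k) (hl : Qt.r k l) : exr Qt oc oc' l := by
  rcases h with h | h
  · exact Or.inl (optr_mono h hl)
  · exact Or.inr (optr_mono h hl)

lemma exr_of_sepcr {x k : Fin n} (h : sepcr U Qt oc oc' x k) : exr Qt oc oc' k := by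
  rcases h with ⟨_, h⟩ | ⟨_, h⟩
  · exact Or.inl h
  · exact Or.inr h

/-- The merge of the classes of `oc`, `oc'` into `Qt`. -/
def mQ (Qt : Setoid (Fin n)) (oc oc' : Option (Fin n)) : Setoid (Fin n) :=
  ⟨fun j k => Qt.r j k ∨ (exr Qt oc oc' j ∧ exr Qt oc oc' k), by
    constructor
    · intro j; exact Or.inl (Qt.iseqv.refl j)
    · rintro j k (h | ⟨h1, h2⟩)
      · exact Or.inl (Qt.iseqv.symm h)
      · exact Or.inr ⟨h2, h1⟩
    · rintro j k l (h | ⟨h1, h2⟩) (h' | ⟨g1, g2⟩)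
      · exact Or.inl (Qt.iseqv.trans h h')
      · exact Or.inr ⟨exr_mono g1 (Qt.iseqv.symm h), g2⟩
      · exact Or.inr ⟨h1, exr_mono h2 h'⟩
      · exact Or.inr ⟨h1, g2⟩⟩

lemma mQ_none_some {c : Fin n} : mQ Qt none (some c) = Qt := by
  apply Setoid.ext
  intro j k
  show Qt.r j k ∨ _ ↔ Qt.r j k
  constructor
  · rintro (h | ⟨h1 | h1, h2 | h2⟩) <;>
      first
        | exact h
        | exact absurd h1 optr_none
        | exact absurd h2 optr_none
        | exact Qt.iseqv.trans (optr_some.mp h1) (Qt.iseqv.symm (optr_some.mp h2))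
  · exact Or.inl

/-- Connectivity pattern for `mk1 P Q a b * sep U Qt oc oc'` when `Q` straddles `U`. -/
def Ss (P : Setoid (Fin n)) (a : Fin n) (Qt : Setoid (Fin n))
    (oc oc' : Option (Fin n)) : W n → W n → Prop := fun x y =>
  match x, y with
  | Sum.inl i, Sum.inl j => P.r i j
  | Sum.inl i, Sum.inr (Sum.inl _) => P.r i a
  | Sum.inl i, Sum.inr (Sum.inr k) => P.r i a ∧ exr Qt oc oc' k
  | Sum.inr (Sum.inl _), Sum.inl i => P.r i a
  | Sum.inr (Sum.inl _), Sum.inr (Sum.inl _) => True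
  | Sum.inr (Sum.inl _), Sum.inr (Sum.inr k) => exr Qt oc oc' k
  | Sum.inr (Sum.inr k), Sum.inl i => P.r i a ∧ exr Qt oc oc' k
  | Sum.inr (Sum.inr k), Sum.inr (Sum.inl _) => exr Qt oc oc' k
  | Sum.inr (Sum.inr j), Sum.inr (Sum.inr k) => Qt.r j k ∨ (exr Qt oc oc' j ∧ exr Qt oc oc' k)

lemma exr_mQ {Qt : Setoid (Fin n)} {oc oc' : Option (Fin n)} {j k : Fin n}
    (h : exr Qt oc oc' j) (hjk : (mQ Qt oc oc').r j k) : exr Qt oc oc' k := by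
  rcases hjk with hjk | ⟨_, h2⟩
  · exact exr_mono h hjk
  · exact h2

lemma Ss_equiv : Equivalence (Ss P a Qt oc oc' (n := n)) := by
  constructor
  · rintro (i | j | k) <;> simp only [Ss] <;>
      first
        | exact P.iseqv.refl _
        | exact Or.inl (Qt.iseqv.refl _)
        | trivial
  · rintro (i | j | k) (i' | j' | k') h <;> simp only [Ss] at h ⊢ <;>
      first
        | exact P.iseqv.symm h
        | exact (mQ Qt oc oc').iseqv.symm h
        | exact h.symm
        | exact h
        | trivial
  · rintro (i | j | k) (i' | j' | k') (i'' | j'' | k'') h h' <;>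
      simp only [Ss] at h h' ⊢ <;>
      first
        | exact P.iseqv.trans h h'
        | exact (mQ Qt oc oc').iseqv.trans h h'
        | exact ⟨P.iseqv.trans h h'.1, h'.2⟩
        | exact P.iseqv.trans h (P.iseqv.symm h')
        | exact P.iseqv.trans h.1 (P.iseqv.symm h'.1)
        | exact P.iseqv.trans (P.iseqv.symm h') h.1
        | exact ⟨P.iseqv.trans (P.iseqv.symm h') h.1, h.2⟩
        | exact ⟨h, h'⟩
        | exact ⟨h', h⟩
        | exact ⟨h.1, h'⟩
        | exact ⟨h'.1, h⟩
        | exact h.1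
        | exact h'.1
        | exact h.2
        | exact h'.2
        | exact h
        | exact h'
        | exact exr_mQ h h'
        | exact exr_mQ h' ((mQ Qt oc oc').iseqv.symm h)
        | exact ⟨h.1, exr_mQ h.2 h'⟩
        | exact ⟨h'.1, exr_mQ h'.2 ((mQ Qt oc oc').iseqv.symm h)⟩
        | exact Or.inr ⟨h, h'⟩
        | exact Or.inr ⟨h', h⟩
        | exact P.iseqv.trans (P.iseqv.symm h) h'
        | exact P.iseqv.trans (P.iseqv.symm h') h
        | exact Or.inr ⟨h.2, h'.2⟩
        | trivial

lemma conn_mk1_sep_straddle {hwf : sepwf Qt oc oc'}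
    (hstr : ∃ u v, Q.r u v ∧ U u ∧ ¬ U v) {x y : W n} :
    conn (mk1 P Q a b) (sep U Qt oc oc' hwf) x y ↔ Ss P a Qt oc oc' x y := by
  obtain ⟨u, v, huv, hu, hv⟩ := hstr
  have hmidu : ∀ j, conn (mk1 P Q a b) (sep U Qt oc oc' hwf) (wm j) (wm u) := by
    intro j
    by_cases hj : U j
    · exact conn_mmb (show (U j ↔ U u) from iff_of_true hj hu)
    · exact conn_trans (conn_mmb (show (U j ↔ U v) from iff_of_false hj hv))
        (conn_mma (show (mk1 P Q a b).r (Sum.inr v) (Sum.inr u) from Q.iseqv.symm huv))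
  have hmm : ∀ j k, conn (mk1 P Q a b) (sep U Qt oc oc' hwf) (wm j) (wm k) :=
    fun j k => conn_trans (hmidu j) (conn_symm (hmidu k))
  have hmb : ∀ j k, exr Qt oc oc' k →
      conn (mk1 P Q a b) (sep U Qt oc oc' hwf) (wm j) (wb k) := by
    intro j k hk
    rcases hk with ⟨c, hc, hkc⟩ | ⟨c, hc, hkc⟩
    · exact conn_trans (hmm j u) (conn_mb (show sepcr U Qt oc oc' u k from
        Or.inl ⟨hu, c, hc, hkc⟩))
    · exact conn_trans (hmm j v) (conn_mb (show sepcr U Qt oc oc' v k from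
        Or.inr ⟨hv, c, hc, hkc⟩))
  have htm : ∀ i j, P.r i a → conn (mk1 P Q a b) (sep U Qt oc oc' hwf) (wt i) (wm j) := by
    intro i j hi
    exact conn_trans (conn_tm (show (mk1 P Q a b).r (Sum.inl i) (Sum.inr b) from
      ⟨hi, Q.iseqv.refl b⟩)) (hmm b j)
  apply conn_iff _ Ss_equiv
  · rintro x y (⟨w, z, hwz, rfl, rfl⟩ | ⟨w, z, hwz, rfl, rfl⟩) <;>
      rcases w with i | i <;> rcases z with j | j <;>
      simp only [topMid, midBot, mk1_ll, mk1_rr, mk1_lr, mk1_rl, sep_ll, sep_rr, sep_lr,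
        sep_rl] at hwz <;> simp only [Ss] <;>
      first
        | exact hwz
        | exact hwz.1
        | exact Or.inl hwz
        | exact exr_of_sepcr hwz
        | trivial
  · rintro (i | j | k) (i' | j' | k') h <;> simp only [Ss] at h
    · exact conn_tt h
    · exact htm i j' h
    · exact conn_trans (htm i b h.1) (hmb b k' h.2)
    · exact conn_symm (htm i' j h)
    · exact hmm j j'
    · exact hmb j k' h
    · exact conn_symm (conn_trans (htm i' b h.1) (hmb b k h.2))
    · exact conn_symm (hmb j' k h)
    · rcases h with h | ⟨h1, h2⟩
      · exact conn_bb h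
      · exact conn_trans (conn_symm (hmb u k h1)) (hmb u k' h2)

/-- Product formula, straddle case. -/
lemma pmul_mk1_sep_straddle {hwf : sepwf Qt oc oc'} {c : Fin n}
    (hstr : ∃ u v, Q.r u v ∧ U u ∧ ¬ U v) (hc : exr Qt oc oc' c) :
    pmul (mk1 P Q a b) (sep U Qt oc oc' hwf) = mk1 P (mQ Qt oc oc') a c := by
  apply Setoid.ext
  have hex : ∀ k, exr Qt oc oc' k ↔ (mQ Qt oc oc').r k c := by
    intro k
    constructor
    · intro h; exact Or.inr ⟨h, hc⟩
    · rintro (h | ⟨h1, _⟩)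
      · exact exr_mono hc (Qt.iseqv.symm h)
      · exact h1
  rintro (i | i) (j | j) <;>
    show conn _ _ (topBot _) (topBot _) ↔ _ <;>
    simp only [topBot] <;>
    rw [conn_mk1_sep_straddle hstr] <;>
    simp only [Ss, mk1_ll, mk1_rr, mk1_lr, mk1_rl]
  · rw [hex]
  · rw [hex]
  · exact Iff.rfl

/-- Connectivity pattern for `mk0 P Q * sep U Qt oc oc'` when `U` is `Q`-closed. -/
def S0 (P : Setoid (Fin n)) (U : Fin n → Prop) (Qt : Setoid (Fin n))
    (oc oc' : Option (Fin n)) : W n → W n → Prop := fun x y =>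
  match x, y with
  | Sum.inl i, Sum.inl j => P.r i j
  | Sum.inl _, Sum.inr _ => False
  | Sum.inr _, Sum.inl _ => False
  | Sum.inr (Sum.inl j), Sum.inr (Sum.inl k) => (U j ↔ U k)
  | Sum.inr (Sum.inl j), Sum.inr (Sum.inr k) => sepcr U Qt oc oc' j k
  | Sum.inr (Sum.inr k), Sum.inr (Sum.inl j) => sepcr U Qt oc oc' j k
  | Sum.inr (Sum.inr j), Sum.inr (Sum.inr k) => Qt.r j k

lemma S0_equiv (hwf : sepwf Qt oc oc') : Equivalence (S0 P U Qt oc oc' (n := n)) := by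
  constructor
  · rintro (i | j | k) <;> simp only [S0] <;>
      first
        | exact P.iseqv.refl _
        | exact Qt.iseqv.refl _
        | exact Iff.rfl
  · rintro (i | j | k) (i' | j' | k') h <;> simp only [S0] at h ⊢ <;>
      first
        | exact P.iseqv.symm h
        | exact Qt.iseqv.symm h
        | exact h.symm
        | exact h
  · rintro (i | j | k) (i' | j' | k') (i'' | j'' | k'') h h' <;>
      simp only [S0] at h h' ⊢ <;>
      first
        | exact P.iseqv.trans h h'
        | exact Qt.iseqv.trans h h'
        | exact h.trans h'
        | exact h.elim
        | exact h'.elim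
        | exact sepcr_of_side h' h.symm
        | exact sepcr_side hwf h h'
        | exact sepcr_mono h h'
        | exact sepcr_of_side h h'
        | exact sepcr_bot h h'
        | exact sepcr_mono h' (Qt.iseqv.symm h)

lemma conn_mk0_sep_closed {hwf : sepwf Qt oc oc'}
    (hU : ∀ x y, Q.r x y → (U x ↔ U y)) {x y : W n} :
    conn (mk0 P Q) (sep U Qt oc oc' hwf) x y ↔ S0 P U Qt oc oc' x y := by
  apply conn_iff _ (S0_equiv hwf)
  · rintro x y (⟨w, z, hwz, rfl, rfl⟩ | ⟨w, z, hwz, rfl, rfl⟩) <;>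
      rcases w with i | i <;> rcases z with j | j <;>
      simp only [topMid, midBot, mk0_ll, mk0_rr, mk0_lr, mk0_rl, sep_ll, sep_rr, sep_lr,
        sep_rl] at hwz <;> simp only [S0] <;>
      first
        | exact hwz
        | exact hU _ _ hwz
        | exact hwz.elim
  · rintro (i | j | k) (i' | j' | k') h <;> simp only [S0] at h <;>
      first
        | exact conn_tt h
        | exact conn_mmb h
        | exact conn_mb h
        | exact conn_symm (conn_mb h)
        | exact conn_bb h
        | exact h.elim

/-- Product formula for a rank-zero left factor, closed case. -/
lemma pmul_mk0_sep_closed {hwf : sepwf Qt oc oc'}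
    (hU : ∀ x y, Q.r x y → (U x ↔ U y)) :
    pmul (mk0 P Q) (sep U Qt oc oc' hwf) = mk0 P Qt := by
  apply Setoid.ext
  rintro (i | i) (j | j) <;>
    show conn _ _ (topBot _) (topBot _) ↔ _ <;>
    simp only [topBot] <;>
    rw [conn_mk0_sep_closed hU] <;>
    simp only [S0, mk0_ll, mk0_rr, mk0_lr, mk0_rl]

end Char2
section PhiZero
set_option linter.unreachableTactic false
set_option linter.unusedTactic false

variable {α β : PM n}

lemma phi_eq_zero_of (h : ∀ j : Fin n, ∃ x : W n, ¬ isMid x ∧ conn α β x (wm j)) :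
    Phi α β = 0 := by
  have : IsEmpty {c : Quotient (connSetoid α β) //
      ∀ x : W n, Quotient.mk (connSetoid α β) x = c → isMid x} := by
    constructor
    rintro ⟨c, hc⟩
    obtain ⟨w, rfl⟩ := Quotient.exists_rep c
    obtain ⟨j, rfl⟩ := hc w rfl
    obtain ⟨x, hx1, hx2⟩ := h j
    exact hx1 (hc x (Quotient.sound hx2))
  rw [Phi]
  exact Nat.card_of_isEmpty

variable {P Q Qt : Setoid (Fin n)} {a b : Fin n} {U : Fin n → Prop} {oc oc' : Option (Fin n)}

lemma phi_sep_bothsome {hwf : sepwf Qt oc oc'} {c c' : Fin n}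
    (h1 : oc = some c) (h2 : oc' = some c') (γ : PM n) :
    Phi γ (sep U Qt oc oc' hwf) = 0 := by
  apply phi_eq_zero_of
  intro j
  by_cases hj : U j
  · exact ⟨wb c, by rintro ⟨k, hk⟩; exact (nomatch hk),
      conn_symm (conn_mb (Or.inl ⟨hj, c, h1, Qt.iseqv.refl c⟩))⟩
  · exact ⟨wb c', by rintro ⟨k, hk⟩; exact (nomatch hk),
      conn_symm (conn_mb (Or.inr ⟨hj, c', h2, Qt.iseqv.refl c'⟩))⟩

lemma phi_sep_Ufalse {hwf : sepwf Qt oc oc'} {c : Fin n}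
    (hU : ∀ j, ¬ U j) (h2 : oc' = some c) (γ : PM n) :
    Phi γ (sep U Qt oc oc' hwf) = 0 := by
  apply phi_eq_zero_of
  intro j
  exact ⟨wb c, by rintro ⟨k, hk⟩; exact (nomatch hk),
    conn_symm (conn_mb (Or.inr ⟨hU j, c, h2, Qt.iseqv.refl c⟩))⟩

lemma phi_mk1_sep_straddle {hwf : sepwf Qt oc oc'} {c : Fin n}
    (hstr : ∃ u v, Q.r u v ∧ U u ∧ ¬ U v) (h2 : oc' = some c) :
    Phi (mk1 P Q a b) (sep U Qt oc oc' hwf) = 0 := by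
  apply phi_eq_zero_of
  intro j
  obtain ⟨u, v, huv, hu, hv⟩ := hstr
  refine ⟨wb c, by rintro ⟨k, hk⟩; exact (nomatch hk), ?_⟩
  apply conn_symm
  by_cases hj : U j
  · exact conn_trans (conn_trans (conn_mmb (show (U j ↔ U u) from iff_of_true hj hu))
      (conn_mma (show (mk1 P Q a b).r (Sum.inr u) (Sum.inr v) from huv)))
      (conn_mb (Or.inr ⟨hv, c, h2, Qt.iseqv.refl c⟩))
  · exact conn_mb (Or.inr ⟨hj, c, h2, Qt.iseqv.refl c⟩)

lemma phi_mk1_sep_closedU {hwf : sepwf Qt oc oc'} {c : Fin n}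
    (hb : U b) (h2 : oc' = some c) :
    Phi (mk1 P Q a b) (sep U Qt oc oc' hwf) = 0 := by
  apply phi_eq_zero_of
  intro j
  by_cases hj : U j
  · refine ⟨wt a, by rintro ⟨k, hk⟩; exact (nomatch hk), ?_⟩
    exact conn_trans (conn_tm (show (mk1 P Q a b).r (Sum.inl a) (Sum.inr b) from
      ⟨P.iseqv.refl a, Q.iseqv.refl b⟩))
      (conn_mmb (show (U b ↔ U j) from iff_of_true hb hj))
  · exact ⟨wb c, by rintro ⟨k, hk⟩; exact (nomatch hk),
      conn_symm (conn_mb (Or.inr ⟨hj, c, h2, Qt.iseqv.refl c⟩))⟩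

end PhiZero

section Funnel
set_option linter.unreachableTactic false
set_option linter.unusedTactic false

variable {P Q Qt : Setoid (Fin n)} {a b c : Fin n}

lemma fn1_wf (Qt : Setoid (Fin n)) (c : Fin n) :
    sepwf Qt none (some c) := fun _ _ h _ => nomatch h

/-- The right funnel: one upper block, lower `Qt`, transversal to the class of `c`. -/
def fn1 (Qt : Setoid (Fin n)) (c : Fin n) : PM n :=
  sep (fun _ => False) Qt none (some c) (fn1_wf Qt c)

lemma pmul_mk1_fn1 : pmul (mk1 P Q a b) (fn1 Qt c) = mk1 P Qt a c := by
  apply pmul_mk1_sep_closed_alive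
  · intro x y _
    exact Iff.rfl
  · exact Or.inr ⟨not_false, rfl⟩

lemma pmul_mk0_fn1 : pmul (mk0 P Q) (fn1 Qt c) = mk0 P Qt := by
  apply pmul_mk0_sep_closed
  intro x y _
  exact Iff.rfl

lemma phi_fn1 (γ : PM n) : Phi γ (fn1 Qt c) = 0 :=
  phi_sep_Ufalse (fun _ h => h) rfl γ

end Funnel
section Flip
set_option linter.unreachableTactic false
set_option linter.unusedTactic false

/-- Flip of a partition (swap primed and unprimed). -/
def flipPM (α : PM n) : PM n :=
  ⟨fun x y => α.r x.swap y.swap,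
   ⟨fun _ => α.iseqv.refl _, fun h => α.iseqv.symm h, fun h h' => α.iseqv.trans h h'⟩⟩

@[simp] lemma flipPM_flipPM (α : PM n) : flipPM (flipPM α) = α := by
  apply Setoid.ext
  intro x y
  show α.r x.swap.swap y.swap.swap ↔ α.r x y
  rw [Sum.swap_swap, Sum.swap_swap]

lemma flip_mk1 {P Q : Setoid (Fin n)} {a b : Fin n} :
    flipPM (mk1 P Q a b) = mk1 Q P b a := by
  apply Setoid.ext
  rintro (i | i) (j | j) <;>
    simp only [flipPM, Sum.swap, mk1_ll, mk1_rr, mk1_lr, mk1_rl] <;>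
    first
      | exact Iff.rfl
      | exact and_comm

lemma flip_mk0 {P Q : Setoid (Fin n)} : flipPM (mk0 P Q) = mk0 Q P := by
  apply Setoid.ext
  rintro (i | i) (j | j) <;> exact Iff.rfl

/-- Flip of the three-row vertex set (exchange top and bottom rows). -/
def flipW : W n → W n
  | Sum.inl i => Sum.inr (Sum.inr i)
  | Sum.inr (Sum.inl j) => Sum.inr (Sum.inl j)
  | Sum.inr (Sum.inr k) => Sum.inl k

@[simp] lemma flipW_flipW (x : W n) : flipW (flipW x) = x := by
  rcases x with i | j | k <;> rfl

lemma flipW_topMid (u : V n) : flipW (topMid u) = midBot u.swap := by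
  rcases u with i | i <;> rfl

lemma flipW_midBot (u : V n) : flipW (midBot u) = topMid u.swap := by
  rcases u with i | i <;> rfl

lemma flipW_topBot (u : V n) : flipW (topBot u) = topBot u.swap := by
  rcases u with i | i <;> rfl

lemma graphRel_flip {α β : PM n} {x y : W n} :
    graphRel (flipPM β) (flipPM α) x y ↔ graphRel α β (flipW x) (flipW y) := by
  constructor
  · rintro (⟨u, v, huv, rfl, rfl⟩ | ⟨u, v, huv, rfl, rfl⟩)
    · exact Or.inr ⟨u.swap, v.swap, huv, flipW_topMid u, flipW_topMid v⟩
    · exact Or.inl ⟨u.swap, v.swap, huv, flipW_midBot u, flipW_midBot v⟩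
  · rintro (⟨u, v, huv, hx, hy⟩ | ⟨u, v, huv, hx, hy⟩)
    · refine Or.inr ⟨u.swap, v.swap, show α.r u.swap.swap v.swap.swap by
        rw [Sum.swap_swap, Sum.swap_swap]; exact huv, ?_, ?_⟩
      · rw [← flipW_flipW x, hx, flipW_topMid]
      · rw [← flipW_flipW y, hy, flipW_topMid]
    · refine Or.inl ⟨u.swap, v.swap, show β.r u.swap.swap v.swap.swap by
        rw [Sum.swap_swap, Sum.swap_swap]; exact huv, ?_, ?_⟩
      · rw [← flipW_flipW x, hx, flipW_midBot]
      · rw [← flipW_flipW y, hy, flipW_midBot]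

lemma conn_flip {α β : PM n} {x y : W n} :
    conn (flipPM β) (flipPM α) x y ↔ conn α β (flipW x) (flipW y) := by
  constructor
  · intro h
    induction h with
    | rel x y h => exact Relation.EqvGen.rel _ _ (graphRel_flip.mp h)
    | refl x => exact Relation.EqvGen.refl _
    | symm x y _ ih => exact Relation.EqvGen.symm _ _ ih
    | trans x y z _ _ ih1 ih2 => exact Relation.EqvGen.trans _ _ _ ih1 ih2
  · intro h
    have key : ∀ u v : W n, conn α β u v →
        conn (flipPM β) (flipPM α) (flipW u) (flipW v) := by
      intro u v h
      induction h with
      | rel u v h => exact Relation.EqvGen.rel _ _ (graphRel_flip.mpr (by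
          rwa [flipW_flipW, flipW_flipW]))
      | refl u => exact Relation.EqvGen.refl _
      | symm u v _ ih => exact Relation.EqvGen.symm _ _ ih
      | trans u v w _ _ ih1 ih2 => exact Relation.EqvGen.trans _ _ _ ih1 ih2
    have := key _ _ h
    rwa [flipW_flipW, flipW_flipW] at this

lemma pmul_flip (α β : PM n) : pmul (flipPM β) (flipPM α) = flipPM (pmul α β) := by
  apply Setoid.ext
  intro x y
  show conn (flipPM β) (flipPM α) (topBot x) (topBot y) ↔
    conn α β (topBot x.swap) (topBot y.swap)
  rw [conn_flip, flipW_topBot, flipW_topBot]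

lemma isMid_flipW {x : W n} : isMid (flipW x) ↔ isMid x := by
  rcases x with i | j | k <;>
    constructor <;> rintro ⟨j', hj⟩ <;>
    first
      | (simp [flipW] at hj; done)
      | (simp [flipW] at hj; done)
      | exact ⟨_, rfl⟩
      | exact ⟨_, hj⟩

lemma Phi_flip (α β : PM n) : Phi α β = Phi (flipPM β) (flipPM α) := by
  rw [Phi, Phi]
  apply Nat.card_congr
  have hc : ∀ x y : W n, (connSetoid α β).r x y →
      (connSetoid (flipPM β) (flipPM α)).r (flipW x) (flipW y) := by
    intro x y h
    apply conn_flip.mpr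
    rwa [flipW_flipW, flipW_flipW]
  have hc' : ∀ x y : W n, (connSetoid (flipPM β) (flipPM α)).r x y →
      (connSetoid α β).r (flipW x) (flipW y) := fun x y h => conn_flip.mp h
  refine ⟨fun c => ⟨Quotient.map flipW hc c.1, ?_⟩,
          fun c => ⟨Quotient.map flipW hc' c.1, ?_⟩, ?_, ?_⟩
  · obtain ⟨c, hp⟩ := c
    induction c using Quotient.ind with
    | _ w =>
      intro x hx
      have : (connSetoid (flipPM β) (flipPM α)).r x (flipW w) := Quotient.exact hx
      have h2 : (connSetoid α β).r (flipW x) w := by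
        have := hc' _ _ this
        rwa [flipW_flipW] at this
      have := hp (flipW x) (Quotient.sound h2)
      rwa [isMid_flipW] at this
  · obtain ⟨c, hp⟩ := c
    induction c using Quotient.ind with
    | _ w =>
      intro x hx
      have : (connSetoid α β).r x (flipW w) := Quotient.exact hx
      have h2 : (connSetoid (flipPM β) (flipPM α)).r (flipW x) w := by
        have := hc _ _ this
        rwa [flipW_flipW] at this
      have := hp (flipW x) (Quotient.sound h2)
      rwa [isMid_flipW] at this
  · rintro ⟨c, hp⟩
    apply Subtype.ext
    show Quotient.map flipW hc' (Quotient.map flipW hc c) = c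
    induction c using Quotient.ind with
    | _ w => simp [Quotient.map_mk]
  · rintro ⟨c, hp⟩
    apply Subtype.ext
    show Quotient.map flipW hc (Quotient.map flipW hc' c) = c
    induction c using Quotient.ind with
    | _ w => simp [Quotient.map_mk]

end Flip
section Invariance
set_option linter.unreachableTactic false
set_option linter.unusedTactic false

variable {P Q : Setoid (Fin n)} {a b : Fin n}

/-- Invariant bounding connectivity when the left factor is `mk1 P Q a b`. -/
def Rinv (P : Setoid (Fin n)) (a : Fin n) : W n → W n → Prop := fun x y =>
  match x, y with
  | Sum.inl i, Sum.inl j => P.r i j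
  | Sum.inl i, Sum.inr _ => P.r i a
  | Sum.inr _, Sum.inl j => P.r j a
  | Sum.inr _, Sum.inr _ => True

lemma Rinv_equiv : Equivalence (Rinv P a (n := n)) := by
  constructor
  · rintro (i | u) <;> simp only [Rinv] <;> first | exact P.iseqv.refl _ | trivial
  · rintro (i | u) (j | v) h <;> simp only [Rinv] at h ⊢ <;>
      first | exact P.iseqv.symm h | exact h | trivial
  · rintro (i | u) (j | v) (k | w) h h' <;> simp only [Rinv] at h h' ⊢ <;>
      first
        | exact P.iseqv.trans h h'
        | exact P.iseqv.trans h (P.iseqv.symm h')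
        | exact P.iseqv.trans (P.iseqv.symm h) h'
        | exact P.iseqv.trans (P.iseqv.symm h') h
        | exact h
        | exact h'
        | trivial

lemma conn_mk1_inv {β : PM n} {x y : W n}
    (h : conn (mk1 P Q a b) β x y) : Rinv P a x y := by
  refine conn_le _ Rinv_equiv ?_ h
  rintro x y (⟨u, v, huv, rfl, rfl⟩ | ⟨u, v, huv, rfl, rfl⟩) <;>
    rcases u with i | i <;> rcases v with j | j <;>
    (try simp only [topMid, midBot, mk1_ll, mk1_rr, mk1_lr, mk1_rl] at huv) <;>
    first
      | exact huv
      | exact huv.1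
      | trivial

lemma upS_pmul_mk1 {β : PM n} : upS (pmul (mk1 P Q a b) β) = P := by
  apply Setoid.ext
  intro i j
  show conn (mk1 P Q a b) β (wt i) (wt j) ↔ P.r i j
  constructor
  · intro h
    exact conn_mk1_inv h
  · exact fun h => conn_tt h

lemma crs_pmul_mk1 {β : PM n} {i j : Fin n}
    (h : crs (pmul (mk1 P Q a b) β) i j) : P.r i a :=
  conn_mk1_inv (show conn (mk1 P Q a b) β (wt i) (wb j) from h)

/-- Invariant when the left factor is `mk0 P Q`. -/
def Rinv0 (P : Setoid (Fin n)) : W n → W n → Prop := fun x y =>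
  match x, y with
  | Sum.inl i, Sum.inl j => P.r i j
  | Sum.inl _, Sum.inr _ => False
  | Sum.inr _, Sum.inl _ => False
  | Sum.inr _, Sum.inr _ => True

lemma Rinv0_equiv : Equivalence (Rinv0 P (n := n)) := by
  constructor
  · rintro (i | u) <;> simp only [Rinv0] <;> first | exact P.iseqv.refl _ | trivial
  · rintro (i | u) (j | v) h <;> simp only [Rinv0] at h ⊢ <;>
      first | exact P.iseqv.symm h | exact h | trivial
  · rintro (i | u) (j | v) (k | w) h h' <;> simp only [Rinv0] at h h' ⊢ <;>
      first
        | exact P.iseqv.trans h h'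
        | exact h.elim
        | exact h'.elim
        | trivial

lemma conn_mk0_inv {β : PM n} {x y : W n}
    (h : conn (mk0 P Q) β x y) : Rinv0 P x y := by
  refine conn_le _ Rinv0_equiv ?_ h
  rintro x y (⟨u, v, huv, rfl, rfl⟩ | ⟨u, v, huv, rfl, rfl⟩) <;>
    rcases u with i | i <;> rcases v with j | j <;>
    (try simp only [topMid, midBot, mk0_ll, mk0_rr, mk0_lr, mk0_rl] at huv) <;>
    first
      | exact huv
      | exact huv.elim
      | trivial

lemma upS_pmul_mk0 {β : PM n} : upS (pmul (mk0 P Q) β) = P := by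
  apply Setoid.ext
  intro i j
  show conn (mk0 P Q) β (wt i) (wt j) ↔ P.r i j
  exact ⟨fun h => conn_mk0_inv h, fun h => conn_tt h⟩

lemma crs_pmul_mk0 {β : PM n} {i j : Fin n} : ¬ crs (pmul (mk0 P Q) β) i j :=
  fun h => conn_mk0_inv (show conn (mk0 P Q) β (wt i) (wb j) from h)

lemma relS_of_eq {s t : Setoid (Fin n)} (h : s = t) (i j : Fin n) : s.r i j ↔ t.r i j := by
  subst h; exact Iff.rfl

/-- Canonical form of a product with a rank-one left factor. -/
lemma pmul_mk1_form (β : PM n) :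
    (∃ c', pmul (mk1 P Q a b) β = mk1 P (loS (pmul (mk1 P Q a b) β)) a c') ∨
      pmul (mk1 P Q a b) β = mk0 P (loS (pmul (mk1 P Q a b) β)) := by
  set γ := pmul (mk1 P Q a b) β with hγ
  have hup : ∀ i j, γ.r (Sum.inl i) (Sum.inl j) ↔ P.r i j := fun i j =>
    relS_of_eq (upS_pmul_mk1 (β := β)) i j
  by_cases hcr : ∃ j, crs γ a j
  · obtain ⟨c', hc'⟩ := hcr
    left
    refine ⟨c', Setoid.ext ?_⟩
    have key : ∀ i k, γ.r (Sum.inl i) (Sum.inr k) ↔ (P.r i a ∧ γ.r (Sum.inr k) (Sum.inr c')) := by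
      intro i k
      constructor
      · intro h
        have hpa : P.r i a := crs_pmul_mk1 (show crs γ i k from h)
        exact ⟨hpa, γ.iseqv.trans (γ.iseqv.symm h)
          (γ.iseqv.trans (hup i a |>.mpr hpa) hc')⟩
      · rintro ⟨hpa, hk⟩
        exact γ.iseqv.trans (hup i a |>.mpr hpa) (γ.iseqv.trans hc' (γ.iseqv.symm hk))
    rintro (i | i) (j | j)
    · exact hup i j
    · exact key i j
    · constructor
      · intro h
        exact (key j i).mp (γ.iseqv.symm h)
      · rintro ⟨h1, h2⟩
        exact γ.iseqv.symm ((key j i).mpr ⟨h1, h2⟩)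
    · exact Iff.rfl
  · right
    apply Setoid.ext
    have key : ∀ i k, ¬ γ.r (Sum.inl i) (Sum.inr k) := by
      intro i k h
      have hpa : P.r i a := crs_pmul_mk1 (show crs γ i k from h)
      exact hcr ⟨k, γ.iseqv.trans (hup a i |>.mpr (P.iseqv.symm hpa)) h⟩
    rintro (i | i) (j | j)
    · exact hup i j
    · exact iff_of_false (key i j) not_false
    · exact iff_of_false (fun h => key j i (γ.iseqv.symm h)) not_false
    · exact Iff.rfl

/-- Canonical form of a product with a rank-zero left factor. -/
lemma pmul_mk0_form (β : PM n) :
    pmul (mk0 P Q) β = mk0 P (loS (pmul (mk0 P Q) β)) := by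
  set γ := pmul (mk0 P Q) β with hγ
  apply Setoid.ext
  have hup : ∀ i j, γ.r (Sum.inl i) (Sum.inl j) ↔ P.r i j := fun i j =>
    relS_of_eq (upS_pmul_mk0 (β := β)) i j
  rintro (i | i) (j | j)
  · exact hup i j
  · exact iff_of_false (fun h => crs_pmul_mk0 (show crs γ i j from h)) not_false
  · exact iff_of_false (fun h => crs_pmul_mk0 (show crs γ j i from γ.iseqv.symm h)) not_false
  · exact Iff.rfl

lemma mem_range_mk1 {γ : PM n} :
    γ ∈ Set.range (pmul (mk1 P Q a b)) ↔
      (∃ R c, γ = mk1 P R a c) ∨ (∃ R, γ = mk0 P R) := by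
  constructor
  · rintro ⟨β, rfl⟩
    rcases pmul_mk1_form (P := P) (Q := Q) (a := a) (b := b) β with ⟨c', h⟩ | h
    · exact Or.inl ⟨_, c', h⟩
    · exact Or.inr ⟨_, h⟩
  · rintro (⟨R, c, rfl⟩ | ⟨R, rfl⟩)
    · exact ⟨fn1 R c, pmul_mk1_fn1⟩
    · refine ⟨sep (fun x => Q.r x b) R none none (fun _ _ h _ => nomatch h), ?_⟩
      apply pmul_mk1_sep_closed_dead
      · intro x y hxy
        exact ⟨fun h => Q.iseqv.trans (Q.iseqv.symm hxy) h, fun h => Q.iseqv.trans hxy h⟩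
      · exact Or.inl ⟨Q.iseqv.refl b, rfl⟩

lemma mem_range_mk0 {γ : PM n} (e : Fin n) :
    γ ∈ Set.range (pmul (mk0 P Q)) ↔ ∃ R, γ = mk0 P R := by
  constructor
  · rintro ⟨β, rfl⟩
    exact ⟨_, pmul_mk0_form β⟩
  · rintro ⟨R, rfl⟩
    exact ⟨fn1 R e, pmul_mk0_fn1⟩

lemma mk1_ne_mk0 {P' Q' : Setoid (Fin n)} : mk1 P Q a b ≠ mk0 P' Q' := by
  intro h
  exact (rel_of_pm_eq h (Sum.inl a) (Sum.inr b)).mp ⟨P.iseqv.refl a, Q.iseqv.refl b⟩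

lemma mk1_eq_iff {P' Q' : Setoid (Fin n)} {a' b' : Fin n} :
    mk1 P Q a b = mk1 P' Q' a' b' ↔ (P = P' ∧ Q = Q' ∧ P.r a a' ∧ Q.r b b') := by
  constructor
  · intro h
    have h1 : P = P' := Setoid.ext fun i j => rel_of_pm_eq h (Sum.inl i) (Sum.inl j)
    have h2 : Q = Q' := Setoid.ext fun i j => rel_of_pm_eq h (Sum.inr i) (Sum.inr j)
    have h3 := (rel_of_pm_eq h (Sum.inl a) (Sum.inr b)).mp ⟨P.iseqv.refl a, Q.iseqv.refl b⟩
    refine ⟨h1, h2, ?_, ?_⟩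
    · have := h3.1
      rw [← h1] at this
      exact this
    · have := h3.2
      rw [← h2] at this
      exact this
  · rintro ⟨rfl, rfl, ha, hb⟩
    exact mk1_congr ha hb

lemma mk0_eq_iff {P' Q' : Setoid (Fin n)} :
    mk0 P Q = mk0 P' Q' ↔ (P = P' ∧ Q = Q') := by
  constructor
  · intro h
    exact ⟨Setoid.ext fun i j => rel_of_pm_eq h (Sum.inl i) (Sum.inl j),
           Setoid.ext fun i j => rel_of_pm_eq h (Sum.inr i) (Sum.inr j)⟩
  · rintro ⟨rfl, rfl⟩
    rfl

/-- Green's `R` for rank-one canonical elements. -/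
lemma greenR_mk1_iff {P' Q' : Setoid (Fin n)} {a' b' : Fin n} :
    greenR (pmul (n := n)) (mk1 P Q a b) (mk1 P' Q' a' b') ↔ (P = P' ∧ P.r a a') := by
  constructor
  · intro h
    have hself : mk1 P Q a b ∈ Set.range (pmul (mk1 P Q a b)) := ⟨fn1 Q b, pmul_mk1_fn1⟩
    rw [greenR] at h
    rw [h] at hself
    rcases mem_range_mk1.mp hself with ⟨R, c, hc⟩ | ⟨R, hc⟩
    · rcases mk1_eq_iff.mp hc with ⟨h1, _, h3, _⟩
      exact ⟨h1, h3⟩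
    · exact absurd hc mk1_ne_mk0
  · rintro ⟨rfl, ha⟩
    rw [greenR]
    apply Set.eq_of_subset_of_subset <;> intro γ hγ <;>
      rw [mem_range_mk1] at hγ ⊢ <;>
      rcases hγ with ⟨R, c, rfl⟩ | ⟨R, rfl⟩
    · exact Or.inl ⟨R, c, mk1_congr ha (R.iseqv.refl c)⟩
    · exact Or.inr ⟨R, rfl⟩
    · exact Or.inl ⟨R, c, mk1_congr (P.iseqv.symm ha) (R.iseqv.refl c)⟩
    · exact Or.inr ⟨R, rfl⟩

/-- Green's `R` for rank-zero canonical elements. -/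
lemma greenR_mk0_iff {P' Q' : Setoid (Fin n)} (e : Fin n) :
    greenR (pmul (n := n)) (mk0 P Q) (mk0 P' Q') ↔ P = P' := by
  constructor
  · intro h
    have hself : mk0 P Q ∈ Set.range (pmul (mk0 P Q)) := ⟨fn1 Q e, pmul_mk0_fn1⟩
    rw [greenR] at h
    rw [h] at hself
    obtain ⟨R, hc⟩ := (mem_range_mk0 e).mp hself
    exact (mk0_eq_iff.mp hc).1
  · rintro rfl
    rw [greenR]
    apply Set.eq_of_subset_of_subset <;> intro γ hγ <;>
      rw [mem_range_mk0 e] at hγ ⊢ <;> exact hγ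

lemma flip_injective : Function.Injective (flipPM (n := n)) := by
  intro α β h
  have := congrArg flipPM h
  rwa [flipPM_flipPM, flipPM_flipPM] at this

/-- Green's `L` via flipping. -/
lemma greenL_iff_flip {α β : PM n} :
    greenL (pmul (n := n)) α β ↔ greenR (pmul (n := n)) (flipPM α) (flipPM β) := by
  have key : ∀ γ : PM n, Set.range (fun a => pmul a γ) =
      flipPM '' Set.range (pmul (flipPM γ)) := by
    intro γ
    apply Set.eq_of_subset_of_subset
    · rintro x ⟨d, rfl⟩
      refine ⟨pmul (flipPM γ) (flipPM d), ⟨flipPM d, rfl⟩, ?_⟩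
      have := pmul_flip (flipPM γ) (flipPM d)
      rw [flipPM_flipPM, flipPM_flipPM] at this
      exact this.symm
    · rintro x ⟨y, ⟨d, rfl⟩, rfl⟩
      refine ⟨flipPM d, ?_⟩
      have := pmul_flip (flipPM γ) d
      rw [flipPM_flipPM] at this
      exact this
  rw [greenL, greenR, key, key]
  constructor
  · intro h
    exact Set.image_injective.mpr flip_injective h
  · intro h
    rw [h]

end Invariance
section HatLemmas
set_option linter.unreachableTactic false
set_option linter.unusedTactic false

variable {P Q : Setoid (Fin n)} {a b : Fin n}

lemma upS_mk1 : upS (mk1 P Q a b) = P := Setoid.ext fun _ _ => Iff.rfl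
lemma loS_mk1 : loS (mk1 P Q a b) = Q := Setoid.ext fun _ _ => Iff.rfl
lemma upS_mk0 : upS (mk0 P Q) = P := Setoid.ext fun _ _ => Iff.rfl
lemma loS_mk0 : loS (mk0 P Q) = Q := Setoid.ext fun _ _ => Iff.rfl
lemma upS_flip {α : PM n} : upS (flipPM α) = loS α := Setoid.ext fun _ _ => Iff.rfl
lemma loS_flip {α : PM n} : loS (flipPM α) = upS α := Setoid.ext fun _ _ => Iff.rfl

lemma hat_mk1 : hat (mk1 P Q a b) = mk0 P Q := by
  apply Setoid.ext
  rintro (i | i) (j | j) <;>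
    simp only [hat, side, mk1_ll, mk1_rr, mk1_lr, mk1_rl, mk0_ll, mk0_rr, mk0_lr, mk0_rl]
  · show P.r i j ∧ (true = true) ↔ P.r i j
    simp
  · show _ ∧ (true = false) ↔ False
    simp
  · show _ ∧ (false = true) ↔ False
    simp
  · show Q.r i j ∧ (false = false) ↔ Q.r i j
    simp

lemma hat_eq_iff {α β : PM n} :
    hat α = hat β ↔ (upS α = upS β ∧ loS α = loS β) := by
  constructor
  · intro h
    constructor
    · apply Setoid.ext
      intro i j
      have := rel_of_pm_eq h (Sum.inl i) (Sum.inl j)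
      show α.r (Sum.inl i) (Sum.inl j) ↔ β.r (Sum.inl i) (Sum.inl j)
      constructor
      · intro hr
        exact (this.mp ⟨hr, rfl⟩).1
      · intro hr
        exact (this.mpr ⟨hr, rfl⟩).1
    · apply Setoid.ext
      intro i j
      have := rel_of_pm_eq h (Sum.inr i) (Sum.inr j)
      show α.r (Sum.inr i) (Sum.inr j) ↔ β.r (Sum.inr i) (Sum.inr j)
      constructor
      · intro hr
        exact (this.mp ⟨hr, rfl⟩).1
      · intro hr
        exact (this.mpr ⟨hr, rfl⟩).1
  · rintro ⟨h1, h2⟩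
    apply Setoid.ext
    rintro (i | i) (j | j) <;>
      show (_ ∧ _) ↔ (_ ∧ _) <;>
      constructor <;> rintro ⟨hr, hs⟩ <;> refine ⟨?_, hs⟩ <;>
      first
        | exact (relS_of_eq h1 i j).mp hr
        | exact (relS_of_eq h1 i j).mpr hr
        | exact (relS_of_eq h2 i j).mp hr
        | exact (relS_of_eq h2 i j).mpr hr
        | exact absurd hs (by simp [side])
        | exact hr

lemma rnk_flip1 {α : PM n} (h : rnk α = 1) : rnk (flipPM α) = 1 := by
  obtain ⟨a, b, hab⟩ := rank1_struct h
  have := congrArg flipPM hab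
  rw [flip_mk1] at this
  rw [this]
  exact rnk_mk1 _ _ _ _

end HatLemmas

section SigmaMachinery
set_option linter.unreachableTactic false
set_option linter.unusedTactic false

variable {σ : (ℕ × PM n) → (ℕ × PM n) → Prop} {i : ℕ}

lemma sig_mulR (hσ : IsCongruence (tmul (n := n)) σ) {α β : PM n}
    (h : σ (i, α) (i, β)) (δ : PM n) (hA : Phi α δ = 0) (hB : Phi β δ = 0) :
    σ (i, pmul α δ) (i, pmul β δ) := by
  have := (hσ.2 (i, α) (i, β) (0, δ) h).2
  simp only [tmul, hA, hB, Nat.add_zero] at this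
  exact this

lemma sig_mulL (hσ : IsCongruence (tmul (n := n)) σ) {α β : PM n}
    (h : σ (i, α) (i, β)) (δ : PM n) (hA : Phi δ α = 0) (hB : Phi δ β = 0) :
    σ (i, pmul δ α) (i, pmul δ β) := by
  have := (hσ.2 (i, α) (i, β) (0, δ) h).1
  simp only [tmul, hA, hB, Nat.add_zero, Nat.zero_add] at this
  exact this

/-- Left funnel. -/
def lfn (Pt : Setoid (Fin n)) (c : Fin n) : PM n := flipPM (fn1 Pt c)

lemma pmul_lfn_mk1 {Pt P Q : Setoid (Fin n)} {c a b : Fin n} :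
    pmul (lfn Pt c) (mk1 P Q a b) = mk1 Pt Q c b := by
  have h1 : flipPM (mk1 Q P b a) = mk1 P Q a b := flip_mk1
  have := pmul_flip (mk1 Q P b a) (fn1 Pt c)
  rw [h1] at this
  rw [lfn, this, pmul_mk1_fn1, flip_mk1]

lemma pmul_lfn_mk0 {Pt P Q : Setoid (Fin n)} {c : Fin n} :
    pmul (lfn Pt c) (mk0 P Q) = mk0 Pt Q := by
  have h1 : flipPM (mk0 Q P) = mk0 P Q := flip_mk0
  have := pmul_flip (mk0 Q P) (fn1 Pt c)
  rw [h1] at this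
  rw [lfn, this, pmul_mk0_fn1, flip_mk0]

lemma phi_lfn {Pt : Setoid (Fin n)} {c : Fin n} (γ : PM n) : Phi (lfn Pt c) γ = 0 := by
  have := Phi_flip (lfn Pt c) γ
  rw [this, lfn, flipPM_flipPM]
  exact phi_fn1 _

lemma sig_fn1R (hσ : IsCongruence (tmul (n := n)) σ) {P Q P' Q' : Setoid (Fin n)}
    {a b a' b' : Fin n} (h : σ (i, mk1 P Q a b) (i, mk1 P' Q' a' b'))
    (Qt : Setoid (Fin n)) (c : Fin n) :
    σ (i, mk1 P Qt a c) (i, mk1 P' Qt a' c) := by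
  have := sig_mulR hσ h (fn1 Qt c) (phi_fn1 _) (phi_fn1 _)
  rwa [pmul_mk1_fn1, pmul_mk1_fn1] at this

lemma sig_lfnL (hσ : IsCongruence (tmul (n := n)) σ) {P Q P' Q' : Setoid (Fin n)}
    {a b a' b' : Fin n} (h : σ (i, mk1 P Q a b) (i, mk1 P' Q' a' b'))
    (Pt : Setoid (Fin n)) (c : Fin n) :
    σ (i, mk1 Pt Q c b) (i, mk1 Pt Q' c b') := by
  have := sig_mulL hσ h (lfn Pt c) (phi_lfn _) (phi_lfn _)
  rwa [pmul_lfn_mk1, pmul_lfn_mk1] at this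

/-- From one nontrivial `μ↑`-pair, all of `μ↑`. -/
lemma gen_muUp (hσ : IsCongruence (tmul (n := n)) σ) {P0 Q0 : Setoid (Fin n)}
    {a0 b0 b0' : Fin n} (htr : σ (i, mk1 P0 Q0 a0 b0) (i, mk1 P0 Q0 a0 b0'))
    (hb : ¬ Q0.r b0 b0') :
    ∀ (P Qt : Setoid (Fin n)) (a c c' : Fin n), σ (i, mk1 P Qt a c) (i, mk1 P Qt a c') := by
  intro P Qt a c c'
  by_cases hcc : Qt.r c c'
  · rw [mk1_congr (P.iseqv.refl a) hcc]
    exact hσ.1.refl _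
  · have step1 : σ (i, mk1 P Q0 a b0) (i, mk1 P Q0 a b0') := sig_lfnL hσ htr P a
    have hwf : sepwf Qt (some c') (some c) := by
      rintro d d' hd hd'
      cases Option.some_inj.mp hd
      cases Option.some_inj.mp hd'
      exact fun hr => hcc (Qt.iseqv.symm hr)
    set U : Fin n → Prop := fun x => Q0.r x b0' with hU
    have hclosed : ∀ x y, Q0.r x y → (U x ↔ U y) :=
      fun x y hxy => ⟨fun h => Q0.iseqv.trans (Q0.iseqv.symm hxy) h,
                      fun h => Q0.iseqv.trans hxy h⟩
    have := sig_mulR hσ step1 (sep U Qt (some c') (some c) hwf)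
      (phi_sep_bothsome rfl rfl _) (phi_sep_bothsome rfl rfl _)
    rwa [pmul_mk1_sep_closed_alive hclosed (Or.inr ⟨hb, rfl⟩),
         pmul_mk1_sep_closed_alive hclosed (Or.inl ⟨Q0.iseqv.refl b0', rfl⟩)] at this

/-- The flipped congruence. -/
def sigF (σ : (ℕ × PM n) → (ℕ × PM n) → Prop) : (ℕ × PM n) → (ℕ × PM n) → Prop :=
  fun x y => σ (x.1, flipPM x.2) (y.1, flipPM y.2)

lemma tmul_flip (a x : ℕ × PM n) :
    ((tmul a x).1, flipPM (tmul a x).2) = tmul (x.1, flipPM x.2) (a.1, flipPM a.2) := by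
  apply Prod.ext
  · show a.1 + x.1 + Phi a.2 x.2 = x.1 + a.1 + Phi (flipPM x.2) (flipPM a.2)
    rw [← Phi_flip, Nat.add_comm a.1 x.1]
  · show flipPM (pmul a.2 x.2) = pmul (flipPM x.2) (flipPM a.2)
    exact (pmul_flip a.2 x.2).symm

lemma isCong_sigF (hσ : IsCongruence (tmul (n := n)) σ) :
    IsCongruence (tmul (n := n)) (sigF σ) := by
  constructor
  · exact ⟨fun x => hσ.1.refl _, fun h => hσ.1.symm h, fun h h' => hσ.1.trans h h'⟩
  · intro x y a h
    constructor
    · show σ ((tmul a x).1, flipPM (tmul a x).2) ((tmul a y).1, flipPM (tmul a y).2)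
      rw [tmul_flip, tmul_flip]
      exact (hσ.2 _ _ (a.1, flipPM a.2) h).2
    · show σ ((tmul x a).1, flipPM (tmul x a).2) ((tmul y a).1, flipPM (tmul y a).2)
      rw [tmul_flip, tmul_flip]
      exact (hσ.2 _ _ (a.1, flipPM a.2) h).1

/-- From one nontrivial `μ↓`-pair, all of `μ↓`. -/
lemma gen_muDown (hσ : IsCongruence (tmul (n := n)) σ) {P0 Q0 : Setoid (Fin n)}
    {a0 a0' b0 : Fin n} (htr : σ (i, mk1 P0 Q0 a0 b0) (i, mk1 P0 Q0 a0' b0))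
    (ha : ¬ P0.r a0 a0') :
    ∀ (P Qt : Setoid (Fin n)) (a a' c : Fin n), σ (i, mk1 P Qt a c) (i, mk1 P Qt a' c) := by
  intro P Qt a a' c
  have htr' : sigF σ (i, mk1 Q0 P0 b0 a0) (i, mk1 Q0 P0 b0 a0') := by
    show σ (i, flipPM (mk1 Q0 P0 b0 a0)) (i, flipPM (mk1 Q0 P0 b0 a0'))
    rw [flip_mk1, flip_mk1]
    exact htr
  have := gen_muUp (isCong_sigF hσ) htr' ha Qt P c a a'
  show σ _ _
  have h1 : σ (i, flipPM (mk1 Qt P c a)) (i, flipPM (mk1 Qt P c a')) := this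
  rwa [flip_mk1, flip_mk1] at h1

end SigmaMachinery
section RhoMachinery
set_option linter.unreachableTactic false
set_option linter.unusedTactic false

variable {σ : (ℕ × PM n) → (ℕ × PM n) → Prop} {i : ℕ}

/-- The full setoid on `Fin n`. -/
def topF : Setoid (Fin n) :=
  ⟨fun _ _ => True, ⟨fun _ => trivial, fun _ => trivial, fun _ _ => trivial⟩⟩

lemma mQ_comm {Qt : Setoid (Fin n)} {o o' : Option (Fin n)} :
    mQ Qt o o' = mQ Qt o' o := by
  apply Setoid.ext
  intro j k
  show Qt.r j k ∨ (exr Qt o o' j ∧ exr Qt o o' k) ↔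
    Qt.r j k ∨ (exr Qt o' o j ∧ exr Qt o' o k)
  have he : ∀ l, exr Qt o o' l ↔ exr Qt o' o l := fun l => or_comm
  rw [he, he]

lemma mk1_top_eq {P Qt : Setoid (Fin n)} {a c : Fin n} (hall : ∀ j, Qt.r j c) :
    mk1 P Qt a c = mk1 P (topF (n := n)) a c := by
  apply Setoid.ext
  rintro (j | j) (k | k) <;>
    simp only [mk1_ll, mk1_rr, mk1_lr, mk1_rl]
  · exact and_congr_right fun _ => iff_of_true (hall k) trivial
  · exact and_congr_right fun _ => iff_of_true (hall j) trivial
  · exact iff_of_true (Qt.iseqv.trans (hall j) (Qt.iseqv.symm (hall k))) trivial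

section Core

variable {Q Q' : Setoid (Fin n)} {x y b1 b2 : Fin n}

/-- Merge step. -/
lemma gen_merge (hσ : IsCongruence (tmul (n := n)) σ)
    (hQ : Q.r x y) (hQ' : ¬ Q'.r x y)
    (htr : ∀ (P : Setoid (Fin n)) (a : Fin n), σ (i, mk1 P Q a b1) (i, mk1 P Q' a b2))
    (P Qt : Setoid (Fin n)) (a c c' : Fin n) (hcc : ¬ Qt.r c c') :
    σ (i, mk1 P (mQ Qt (some c) (some c')) a c) (i, mk1 P Qt a c) := by
  set U : Fin n → Prop := fun z => Q'.r z x with hUdef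
  have hclosed : ∀ u v, Q'.r u v → (U u ↔ U v) :=
    fun u v huv => ⟨fun h => Q'.iseqv.trans (Q'.iseqv.symm huv) h,
                    fun h => Q'.iseqv.trans huv h⟩
  have hstr : ∃ u v, Q.r u v ∧ U u ∧ ¬ U v :=
    ⟨x, y, hQ, Q'.iseqv.refl x, fun h => hQ' (Q'.iseqv.symm h)⟩
  by_cases hb2 : U b2
  · have hwf : sepwf Qt (some c) (some c') := by
      rintro d d' hd hd'
      cases Option.some_inj.mp hd
      cases Option.some_inj.mp hd'
      exact hcc
    have := sig_mulR hσ (htr P a) (sep U Qt (some c) (some c') hwf)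
      (phi_sep_bothsome rfl rfl _) (phi_sep_bothsome rfl rfl _)
    rwa [pmul_mk1_sep_straddle hstr (Or.inl (optr_some.mpr (Qt.iseqv.refl c))),
         pmul_mk1_sep_closed_alive hclosed (Or.inl ⟨hb2, rfl⟩)] at this
  · have hwf : sepwf Qt (some c') (some c) := by
      rintro d d' hd hd'
      cases Option.some_inj.mp hd
      cases Option.some_inj.mp hd'
      exact fun hr => hcc (Qt.iseqv.symm hr)
    have := sig_mulR hσ (htr P a) (sep U Qt (some c') (some c) hwf)
      (phi_sep_bothsome rfl rfl _) (phi_sep_bothsome rfl rfl _)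
    rw [pmul_mk1_sep_straddle hstr (Or.inr (optr_some.mpr (Qt.iseqv.refl c))),
        pmul_mk1_sep_closed_alive hclosed (Or.inr ⟨hb2, rfl⟩)] at this
    rwa [mQ_comm] at this

/-- Chain to the top partition. -/
lemma gen_chain (hσ : IsCongruence (tmul (n := n)) σ)
    (hQ : Q.r x y) (hQ' : ¬ Q'.r x y)
    (htr : ∀ (P : Setoid (Fin n)) (a : Fin n), σ (i, mk1 P Q a b1) (i, mk1 P Q' a b2)) :
    ∀ (Qt P : Setoid (Fin n)) (a c : Fin n),
      σ (i, mk1 P Qt a c) (i, mk1 P (topF (n := n)) a c) := by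
  classical
  suffices H : ∀ (m : ℕ) (Qt P : Setoid (Fin n)) (a c : Fin n),
      (Finset.univ.filter fun j => ¬ Qt.r j c).card ≤ m →
      σ (i, mk1 P Qt a c) (i, mk1 P (topF (n := n)) a c) by
    intro Qt P a c
    exact H _ Qt P a c le_rfl
  intro m
  induction m with
  | zero =>
    intro Qt P a c hcard
    have hall : ∀ j, Qt.r j c := by
      intro j
      by_contra hj
      have : j ∈ Finset.univ.filter fun j => ¬ Qt.r j c := by
        simp [hj]
      have := Finset.card_pos.mpr ⟨j, this⟩
      omega
    rw [mk1_top_eq hall]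
    exact hσ.1.refl _
  | succ m ih =>
    intro Qt P a c hcard
    by_cases hall : ∀ j, Qt.r j c
    · rw [mk1_top_eq hall]
      exact hσ.1.refl _
    · push_neg at hall
      obtain ⟨cs, hcs⟩ := hall
      have hcc : ¬ Qt.r c cs := fun h => hcs (Qt.iseqv.symm h)
      set Qt' := mQ Qt (some c) (some cs) with hQt'
      have hstep := gen_merge hσ hQ hQ' htr P Qt a c cs hcc
      have hsub : (Finset.univ.filter fun j => ¬ Qt'.r j c) ⊂
          (Finset.univ.filter fun j => ¬ Qt.r j c) := by
        constructor
        · intro j hj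
          simp only [Finset.mem_filter, Finset.mem_univ, true_and] at hj ⊢
          intro hr
          exact hj (Or.inl hr)
        · intro hsup
          have hcs' : cs ∈ Finset.univ.filter fun j => ¬ Qt.r j c := by
            simp [hcs]
          have := hsup hcs'
          simp only [Finset.mem_filter, Finset.mem_univ, true_and] at this
          exact this (Or.inr ⟨Or.inr (optr_some.mpr (Qt.iseqv.refl cs)),
            Or.inl (optr_some.mpr (Qt.iseqv.refl c))⟩)
      have hlt := Finset.card_lt_card hsub
      have hle : (Finset.univ.filter fun j => ¬ Qt'.r j c).card ≤ m := by omega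
      exact hσ.1.trans (hσ.1.symm hstep) (ih Qt' P a c hle)

/-- Closure: all rank-one elements with the same upper data are related. -/
lemma gen_closure (hσ : IsCongruence (tmul (n := n)) σ)
    (hQ : Q.r x y) (hQ' : ¬ Q'.r x y)
    (htr : ∀ (P : Setoid (Fin n)) (a : Fin n), σ (i, mk1 P Q a b1) (i, mk1 P Q' a b2)) :
    ∀ (P Qt1 Qt2 : Setoid (Fin n)) (a c1 c2 : Fin n),
      σ (i, mk1 P Qt1 a c1) (i, mk1 P Qt2 a c2) := by
  intro P Qt1 Qt2 a c1 c2
  have h1 := gen_chain hσ hQ hQ' htr Qt1 P a c1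
  have h2 := gen_chain hσ hQ hQ' htr Qt2 P a c2
  have he : mk1 P (topF (n := n)) a c1 = mk1 P topF a c2 :=
    mk1_congr (P.iseqv.refl a) trivial
  rw [he] at h1
  exact hσ.1.trans h1 (hσ.1.symm h2)

/-- Dead pairs: rank-one related to rank-zero. -/
lemma gen_dead (hσ : IsCongruence (tmul (n := n)) σ)
    (hQ : Q.r x y) (hQ' : ¬ Q'.r x y)
    (htr : ∀ (P : Setoid (Fin n)) (a : Fin n), σ (i, mk1 P Q a b1) (i, mk1 P Q' a b2)) :
    ∀ (P Qt : Setoid (Fin n)) (a c : Fin n), σ (i, mk1 P Qt a c) (i, mk0 P Qt) := by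
  intro P Qt a c
  have hpair : σ (i, mk1 P Q a y) (i, mk1 P Q' a x) := by
    have := gen_closure hσ hQ hQ' htr P Q Q' a y x
    exact this
  set U : Fin n → Prop := fun z => Q'.r z x with hUdef
  have hclosed : ∀ u v, Q'.r u v → (U u ↔ U v) :=
    fun u v huv => ⟨fun h => Q'.iseqv.trans (Q'.iseqv.symm huv) h,
                    fun h => Q'.iseqv.trans huv h⟩
  have hstr : ∃ u v, Q.r u v ∧ U u ∧ ¬ U v :=
    ⟨x, y, hQ, Q'.iseqv.refl x, fun h => hQ' (Q'.iseqv.symm h)⟩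
  have hwf : sepwf Qt none (some c) := fun d d' hd _ => nomatch hd
  have := sig_mulR hσ hpair (sep U Qt none (some c) hwf)
    (phi_mk1_sep_straddle hstr rfl) (phi_mk1_sep_closedU (Q'.iseqv.refl x) rfl)
  rw [pmul_mk1_sep_straddle hstr (Or.inr (optr_some.mpr (Qt.iseqv.refl c))),
      pmul_mk1_sep_closed_dead hclosed (Or.inl ⟨Q'.iseqv.refl x, rfl⟩)] at this
  rwa [mQ_none_some] at this

/-- All of `μ` on rank one. -/
lemma gen_mu_of (hσ : IsCongruence (tmul (n := n)) σ)
    (hQ : Q.r x y) (hQ' : ¬ Q'.r x y)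
    (htr : ∀ (P : Setoid (Fin n)) (a : Fin n), σ (i, mk1 P Q a b1) (i, mk1 P Q' a b2)) :
    ∀ (P Qt : Setoid (Fin n)) (a c a' c' : Fin n),
      σ (i, mk1 P Qt a c) (i, mk1 P Qt a' c') := by
  intro P Qt a c a' c'
  exact hσ.1.trans (gen_dead hσ hQ hQ' htr P Qt a c)
    (hσ.1.symm (gen_dead hσ hQ hQ' htr P Qt a' c'))

/-- All same-upper-partition rank-one pairs. -/
lemma gen_rho_core (hσ : IsCongruence (tmul (n := n)) σ)
    (hQ : Q.r x y) (hQ' : ¬ Q'.r x y)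
    (htr : ∀ (P : Setoid (Fin n)) (a : Fin n), σ (i, mk1 P Q a b1) (i, mk1 P Q' a b2)) :
    ∀ (P Qt1 Qt2 : Setoid (Fin n)) (a1 c1 a2 c2 : Fin n),
      σ (i, mk1 P Qt1 a1 c1) (i, mk1 P Qt2 a2 c2) := by
  intro P Qt1 Qt2 a1 c1 a2 c2
  exact hσ.1.trans (gen_closure hσ hQ hQ' htr P Qt1 Qt2 a1 c1 c2)
    (gen_mu_of hσ hQ hQ' htr P Qt2 a1 c2 a2 c2)

end Core

/-- `ρ̂`-generation from a lower-difference pair. -/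
lemma gen_rho (hσ : IsCongruence (tmul (n := n)) σ) {α0 β0 : PM n}
    (h1 : rnk α0 = 1) (h2 : rnk β0 = 1)
    (htr : σ (i, α0) (i, β0)) (hne : loS α0 ≠ loS β0) :
    ∀ γ δ, rnk γ = 1 → rnk δ = 1 → upS γ = upS δ → σ (i, γ) (i, δ) := by
  obtain ⟨a1, c1, hα⟩ := rank1_struct h1
  obtain ⟨a2, c2, hβ⟩ := rank1_struct h2
  set Qa := loS α0
  set Qb := loS β0
  have hex : ∃ u v, ¬ (Qa.r u v ↔ Qb.r u v) := by
    by_contra hno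
    push_neg at hno
    exact hne (Setoid.ext fun u v => hno u v)
  obtain ⟨u, v, huv⟩ := hex
  have hfun : ∀ (P : Setoid (Fin n)) (a : Fin n),
      σ (i, mk1 P Qa a c1) (i, mk1 P Qb a c2) := by
    intro P a
    have h := htr
    rw [hα, hβ] at h
    exact sig_lfnL hσ h P a
  by_cases hab : Qa.r u v
  · have hnb : ¬ Qb.r u v := fun h => huv (iff_of_true hab h)
    intro γ δ hγ hδ hup
    obtain ⟨g1, g2, hγs⟩ := rank1_struct hγ
    obtain ⟨d1, d2, hδs⟩ := rank1_struct hδ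
    rw [hγs, hδs, ← hup]
    exact gen_rho_core hσ hab hnb hfun (upS γ) _ _ g1 g2 d1 d2
  · have hb : Qb.r u v := by
      by_contra hnb
      exact huv (iff_of_false hab hnb)
    have hfun' : ∀ (P : Setoid (Fin n)) (a : Fin n),
        σ (i, mk1 P Qb a c2) (i, mk1 P Qa a c1) := fun P a => hσ.1.symm (hfun P a)
    intro γ δ hγ hδ hup
    obtain ⟨g1, g2, hγs⟩ := rank1_struct hγ
    obtain ⟨d1, d2, hδs⟩ := rank1_struct hδ
    rw [hγs, hδs, ← hup]
    exact gen_rho_core hσ hb hab hfun' (upS γ) _ _ g1 g2 d1 d2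

/-- `λ̂`-generation from an upper-difference pair. -/
lemma gen_lambda (hσ : IsCongruence (tmul (n := n)) σ) {α0 β0 : PM n}
    (h1 : rnk α0 = 1) (h2 : rnk β0 = 1)
    (htr : σ (i, α0) (i, β0)) (hne : upS α0 ≠ upS β0) :
    ∀ γ δ, rnk γ = 1 → rnk δ = 1 → loS γ = loS δ → σ (i, γ) (i, δ) := by
  have hF := isCong_sigF hσ
  have htr' : sigF σ (i, flipPM α0) (i, flipPM β0) := by
    show σ (i, flipPM (flipPM α0)) (i, flipPM (flipPM β0))
    rw [flipPM_flipPM, flipPM_flipPM]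
    exact htr
  have hne' : loS (flipPM α0) ≠ loS (flipPM β0) := by
    rw [loS_flip, loS_flip]
    exact hne
  have key := gen_rho (σ := sigF σ) hF (rnk_flip1 h1) (rnk_flip1 h2) htr' hne'
  intro γ δ hγ hδ hlo
  have := key (flipPM γ) (flipPM δ) (rnk_flip1 hγ) (rnk_flip1 hδ)
    (by rw [upS_flip, upS_flip]; exact hlo)
  show σ _ _
  have h' : σ (i, flipPM (flipPM γ)) (i, flipPM (flipPM δ)) := this
  rwa [flipPM_flipPM, flipPM_flipPM] at h'

end RhoMachinery
section Translate
set_option linter.unreachableTactic false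
set_option linter.unusedTactic false

variable {P Q : Setoid (Fin n)} {a b : Fin n}

lemma dom_mk1 {k : Fin n} : (∃ j, crs (mk1 P Q a b) k j) ↔ P.r k a :=
  ⟨fun ⟨_, h⟩ => h.1, fun h => ⟨b, h, Q.iseqv.refl b⟩⟩

lemma cod_mk1 {k : Fin n} : (∃ j, crs (mk1 P Q a b) j k) ↔ Q.r k b :=
  ⟨fun ⟨_, h⟩ => h.2, fun h => ⟨a, P.iseqv.refl a, h⟩⟩

lemma dom_iff_of_struct {α : PM n} {a1 c1 : Fin n}
    (hα : α = mk1 (upS α) (loS α) a1 c1) (k : Fin n) :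
    (∃ j, crs α k j) ↔ (upS α).r k a1 := by
  conv_lhs => rw [hα]
  exact dom_mk1

lemma cod_iff_of_struct {α : PM n} {a1 c1 : Fin n}
    (hα : α = mk1 (upS α) (loS α) a1 c1) (k : Fin n) :
    (∃ j, crs α j k) ↔ (loS α).r k c1 := by
  conv_lhs => rw [hα]
  exact cod_mk1

lemma crs_flip {α : PM n} {k j : Fin n} : crs (flipPM α) k j ↔ crs α j k := by
  show α.r (Sum.inr k) (Sum.inl j) ↔ α.r (Sum.inl j) (Sum.inr k)
  exact ⟨fun h => α.iseqv.symm h, fun h => α.iseqv.symm h⟩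

lemma greenR_hat_iff {α β : PM n} (h1 : rnk α = 1) (h2 : rnk β = 1) :
    greenR (pmul (n := n)) (hat α) (hat β) ↔ upS α = upS β := by
  obtain ⟨a1, c1, hα⟩ := rank1_struct h1
  obtain ⟨a2, c2, hβ⟩ := rank1_struct h2
  conv_lhs => rw [hα, hβ, hat_mk1, hat_mk1]
  exact greenR_mk0_iff a1

lemma greenL_hat_iff {α β : PM n} (h1 : rnk α = 1) (h2 : rnk β = 1) :
    greenL (pmul (n := n)) (hat α) (hat β) ↔ loS α = loS β := by
  obtain ⟨a1, c1, hα⟩ := rank1_struct h1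
  obtain ⟨a2, c2, hβ⟩ := rank1_struct h2
  rw [greenL_iff_flip]
  conv_lhs => rw [hα, hβ, hat_mk1, hat_mk1, flip_mk0, flip_mk0]
  exact greenR_mk0_iff a1

lemma greenR_rank1_iff {α β : PM n} (h1 : rnk α = 1) (h2 : rnk β = 1) :
    greenR (pmul (n := n)) α β ↔
      (upS α = upS β ∧ ∀ k, (∃ j, crs α k j) ↔ (∃ j, crs β k j)) := by
  obtain ⟨a1, c1, hα⟩ := rank1_struct h1
  obtain ⟨a2, c2, hβ⟩ := rank1_struct h2
  conv_lhs => rw [hα, hβ]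
  rw [greenR_mk1_iff]
  apply and_congr_right
  intro hup
  constructor
  · intro ha k
    rw [dom_iff_of_struct hα, dom_iff_of_struct hβ, ← hup]
    exact ⟨fun h => (upS α).iseqv.trans h ha,
           fun h => (upS α).iseqv.trans h ((upS α).iseqv.symm ha)⟩
  · intro hd
    have := hd a1
    rw [dom_iff_of_struct hα, dom_iff_of_struct hβ, ← hup] at this
    exact this.mp ((upS α).iseqv.refl a1)

lemma greenL_rank1_iff {α β : PM n} (h1 : rnk α = 1) (h2 : rnk β = 1) :
    greenL (pmul (n := n)) α β ↔
      (loS α = loS β ∧ ∀ k, (∃ j, crs α j k) ↔ (∃ j, crs β j k)) := by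
  rw [greenL_iff_flip, greenR_rank1_iff (rnk_flip1 h1) (rnk_flip1 h2),
    upS_flip, upS_flip]
  apply and_congr_right
  intro _
  constructor
  · intro h k
    have := h k
    simp only [crs_flip] at this
    exact this
  · intro h k
    simp only [crs_flip]
    exact h k

lemma eq_of_same_all {α β : PM n} (h1 : rnk α = 1) (h2 : rnk β = 1)
    (hup : upS α = upS β) (hlo : loS α = loS β)
    (hdom : ∀ k, (∃ j, crs α k j) ↔ (∃ j, crs β k j))
    (hcod : ∀ k, (∃ j, crs α j k) ↔ (∃ j, crs β j k)) : α = β := by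
  obtain ⟨a1, c1, hα⟩ := rank1_struct h1
  obtain ⟨a2, c2, hβ⟩ := rank1_struct h2
  have hA : (upS α).r a1 a2 := by
    have := hdom a1
    rw [dom_iff_of_struct hα, dom_iff_of_struct hβ, ← hup] at this
    exact this.mp ((upS α).iseqv.refl a1)
  have hC : (loS α).r c1 c2 := by
    have := hcod c1
    rw [cod_iff_of_struct hα, cod_iff_of_struct hβ, ← hlo] at this
    exact this.mp ((loS α).iseqv.refl c1)
  rw [hα, hβ, ← hup, ← hlo]
  exact mk1_congr hA hC

end Translate

section MuFromPairs
set_option linter.unreachableTactic false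
set_option linter.unusedTactic false

variable {σ : (ℕ × PM n) → (ℕ × PM n) → Prop} {i : ℕ}

lemma muUp_from_pair (hσ : IsCongruence (tmul (n := n)) σ) {α β : PM n}
    (h1 : rnk α = 1) (h2 : rnk β = 1) (hσ0 : σ (i, α) (i, β))
    (hup : upS α = upS β) (hlo : loS α = loS β)
    (hcod : ¬ ∀ k, (∃ j, crs α j k) ↔ (∃ j, crs β j k)) :
    ∀ (P Qt : Setoid (Fin n)) (a c c' : Fin n),
      σ (i, mk1 P Qt a c) (i, mk1 P Qt a c') := by
  obtain ⟨a1, b1, hα⟩ := rank1_struct h1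
  obtain ⟨a2, b2, hβ⟩ := rank1_struct h2
  have hQ : ¬ (loS α).r b1 b2 := by
    intro hq
    apply hcod
    intro k
    rw [cod_iff_of_struct hα, cod_iff_of_struct hβ, ← hlo]
    exact ⟨fun h => (loS α).iseqv.trans h hq,
           fun h => (loS α).iseqv.trans h ((loS α).iseqv.symm hq)⟩
  have h := hσ0
  rw [hα, hβ, ← hup, ← hlo] at h
  exact gen_muUp hσ (sig_lfnL hσ h (topF (n := n)) a1) hQ

lemma muDown_from_pair (hσ : IsCongruence (tmul (n := n)) σ) {α β : PM n}
    (h1 : rnk α = 1) (h2 : rnk β = 1) (hσ0 : σ (i, α) (i, β))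
    (hup : upS α = upS β) (hlo : loS α = loS β)
    (hdom : ¬ ∀ k, (∃ j, crs α k j) ↔ (∃ j, crs β k j)) :
    ∀ (P Qt : Setoid (Fin n)) (a a' c : Fin n),
      σ (i, mk1 P Qt a c) (i, mk1 P Qt a' c) := by
  obtain ⟨a1, b1, hα⟩ := rank1_struct h1
  obtain ⟨a2, b2, hβ⟩ := rank1_struct h2
  have hP : ¬ (upS α).r a1 a2 := by
    intro hq
    apply hdom
    intro k
    rw [dom_iff_of_struct hα, dom_iff_of_struct hβ, ← hup]
    exact ⟨fun h => (upS α).iseqv.trans h hq,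
           fun h => (upS α).iseqv.trans h ((upS α).iseqv.symm hq)⟩
  have h := hσ0
  rw [hα, hβ, ← hup, ← hlo] at h
  exact gen_muDown hσ (sig_fn1R hσ h (topF (n := n)) b1) hP

end MuFromPairs
/-- For a congruence `σ` on `P_n^Φ` and `i ∈ ℕ`, the restriction
`σ_{1i}` to `D_{1i}` is one of seven relations on `D_1`: equality, `μ↑`, `μ↓`,
`μ = {α̂ = β̂}`, `{α̂ R β̂}`, `{α̂ L β̂}`, or `D_1 × D_1`. -/
theorem row1_restrictions (n : ℕ) (hn : 1 ≤ n)
    (σ : (ℕ × PM n) → (ℕ × PM n) → Prop) (hσ : IsCongruence (tmul (n := n)) σ)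
    (i : ℕ) (s : PM n → PM n → Prop)
    (hs : s = fun α β => rnk α = 1 ∧ rnk β = 1 ∧ σ (i, α) (i, β)) :
    s = (fun α β => rnk α = 1 ∧ rnk β = 1 ∧ α = β) ∨
    s = (fun α β => rnk α = 1 ∧ rnk β = 1 ∧ hat α = hat β ∧ greenR (pmul (n := n)) α β) ∨
    s = (fun α β => rnk α = 1 ∧ rnk β = 1 ∧ hat α = hat β ∧ greenL (pmul (n := n)) α β) ∨
    s = (fun α β => rnk α = 1 ∧ rnk β = 1 ∧ hat α = hat β) ∨
    s = (fun α β => rnk α = 1 ∧ rnk β = 1 ∧ greenR (pmul (n := n)) (hat α) (hat β)) ∨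
    s = (fun α β => rnk α = 1 ∧ rnk β = 1 ∧ greenL (pmul (n := n)) (hat α) (hat β)) ∨
    s = (fun α β => rnk α = 1 ∧ rnk β = 1) := by
  classical
  subst hs
  set T : PM n → PM n → Prop :=
    fun α β => rnk α = 1 ∧ rnk β = 1 ∧ σ (i, α) (i, β) with hT
  have hTs : ∀ α β, T α β → T β α := by
    rintro α β ⟨h1, h2, h3⟩
    exact ⟨h2, h1, hσ.1.symm h3⟩
  by_cases hdQ : ∃ α β : PM n, T α β ∧ loS α ≠ loS β
  · by_cases hdP : ∃ α β : PM n, T α β ∧ upS α ≠ upS β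
    · -- full relation
      right; right; right; right; right; right
      funext α β
      apply propext
      constructor
      · rintro ⟨h1, h2, _⟩
        exact ⟨h1, h2⟩
      · rintro ⟨h1, h2⟩
        refine ⟨h1, h2, ?_⟩
        obtain ⟨α0, β0, ⟨r1, r2, hs0⟩, hne⟩ := hdQ
        obtain ⟨α1, β1, ⟨r1', r2', hs1⟩, hne'⟩ := hdP
        have Hrho : ∀ γ δ : PM n, rnk γ = 1 → rnk δ = 1 → upS γ = upS δ →
            σ (i, γ) (i, δ) := gen_rho hσ r1 r2 hs0 hne
        have Hlam : ∀ γ δ : PM n, rnk γ = 1 → rnk δ = 1 → loS γ = loS δ →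
            σ (i, γ) (i, δ) := gen_lambda hσ r1' r2' hs1 hne'
        set e : Fin n := ⟨0, hn⟩ with he
        exact hσ.1.trans
          (Hrho α (mk1 (upS α) (loS β) e e) h1 (rnk_mk1 _ _ _ _) upS_mk1.symm)
          (Hlam (mk1 (upS α) (loS β) e e) β (rnk_mk1 _ _ _ _) h2 loS_mk1)
    · -- greenR on hats
      right; right; right; right; left
      funext α β
      apply propext
      constructor
      · rintro ⟨h1, h2, h3⟩
        refine ⟨h1, h2, (greenR_hat_iff h1 h2).mpr ?_⟩
        by_contra hne
        exact hdP ⟨α, β, ⟨h1, h2, h3⟩, hne⟩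
      · rintro ⟨h1, h2, hR⟩
        obtain ⟨α0, β0, ⟨r1, r2, hs0⟩, hne⟩ := hdQ
        exact ⟨h1, h2,
          gen_rho hσ r1 r2 hs0 hne α β h1 h2 ((greenR_hat_iff h1 h2).mp hR)⟩
  · by_cases hdP : ∃ α β : PM n, T α β ∧ upS α ≠ upS β
    · -- greenL on hats
      right; right; right; right; right; left
      funext α β
      apply propext
      constructor
      · rintro ⟨h1, h2, h3⟩
        refine ⟨h1, h2, (greenL_hat_iff h1 h2).mpr ?_⟩
        by_contra hne
        exact hdQ ⟨α, β, ⟨h1, h2, h3⟩, hne⟩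
      · rintro ⟨h1, h2, hL⟩
        obtain ⟨α0, β0, ⟨r1, r2, hs0⟩, hne⟩ := hdP
        exact ⟨h1, h2,
          gen_lambda hσ r1 r2 hs0 hne α β h1 h2 ((greenL_hat_iff h1 h2).mp hL)⟩
    · -- all pairs have equal upper and lower data
      have hupall : ∀ α β, T α β → upS α = upS β := by
        intro α β h
        by_contra hne
        exact hdP ⟨α, β, h, hne⟩
      have hloall : ∀ α β, T α β → loS α = loS β := by
        intro α β h
        by_contra hne
        exact hdQ ⟨α, β, h, hne⟩
      by_cases hdA : ∃ α β : PM n, T α β ∧ ¬ ∀ k, (∃ j, crs α k j) ↔ (∃ j, crs β k j)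
      · by_cases hdB : ∃ α β : PM n, T α β ∧ ¬ ∀ k, (∃ j, crs α j k) ↔ (∃ j, crs β j k)
        · -- μ
          right; right; right; left
          funext α β
          apply propext
          constructor
          · rintro ⟨h1, h2, h3⟩
            exact ⟨h1, h2, hat_eq_iff.mpr
              ⟨hupall α β ⟨h1, h2, h3⟩, hloall α β ⟨h1, h2, h3⟩⟩⟩
          · rintro ⟨h1, h2, h3⟩
            obtain ⟨hup, hlo⟩ := hat_eq_iff.mp h3
            obtain ⟨αA, βA, hTA, hdomA⟩ := hdA
            obtain ⟨αB, βB, hTB, hcodB⟩ := hdB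
            have HD := muDown_from_pair hσ hTA.1 hTA.2.1 hTA.2.2
              (hupall _ _ hTA) (hloall _ _ hTA) hdomA
            have HU := muUp_from_pair hσ hTB.1 hTB.2.1 hTB.2.2
              (hupall _ _ hTB) (hloall _ _ hTB) hcodB
            refine ⟨h1, h2, ?_⟩
            obtain ⟨a1, c1, hα⟩ := rank1_struct h1
            obtain ⟨a2, c2, hβ⟩ := rank1_struct h2
            rw [hα, hβ, ← hup, ← hlo]
            exact hσ.1.trans (HU (upS α) (loS α) a1 c1 c2)
              (HD (upS α) (loS α) a1 a2 c2)
        · -- μ↓ : hat equal and L-related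
          right; right; left
          funext α β
          apply propext
          constructor
          · rintro ⟨h1, h2, h3⟩
            have hup := hupall α β ⟨h1, h2, h3⟩
            have hlo := hloall α β ⟨h1, h2, h3⟩
            refine ⟨h1, h2, hat_eq_iff.mpr ⟨hup, hlo⟩,
              (greenL_rank1_iff h1 h2).mpr ⟨hlo, ?_⟩⟩
            by_contra hcod
            exact hdB ⟨α, β, ⟨h1, h2, h3⟩, hcod⟩
          · rintro ⟨h1, h2, h3, hL⟩
            obtain ⟨hup, hlo⟩ := hat_eq_iff.mp h3
            have hcod := ((greenL_rank1_iff h1 h2).mp hL).2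
            obtain ⟨αA, βA, hTA, hdomA⟩ := hdA
            have HD := muDown_from_pair hσ hTA.1 hTA.2.1 hTA.2.2
              (hupall _ _ hTA) (hloall _ _ hTA) hdomA
            refine ⟨h1, h2, ?_⟩
            obtain ⟨a1, c1, hα⟩ := rank1_struct h1
            obtain ⟨a2, c2, hβ⟩ := rank1_struct h2
            have hC : (loS α).r c1 c2 := by
              have := hcod c1
              rw [cod_iff_of_struct hα, cod_iff_of_struct hβ, ← hlo] at this
              exact this.mp ((loS α).iseqv.refl c1)
            rw [hα, hβ, ← hup, ← hlo,
              show mk1 (upS α) (loS α) a2 c2 = mk1 (upS α) (loS α) a2 c1 from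
                mk1_congr ((upS α).iseqv.refl a2) ((loS α).iseqv.symm hC)]
            exact HD (upS α) (loS α) a1 a2 c1
      · by_cases hdB : ∃ α β : PM n, T α β ∧ ¬ ∀ k, (∃ j, crs α j k) ↔ (∃ j, crs β j k)
        · -- μ↑ : hat equal and R-related
          right; left
          funext α β
          apply propext
          constructor
          · rintro ⟨h1, h2, h3⟩
            have hup := hupall α β ⟨h1, h2, h3⟩
            have hlo := hloall α β ⟨h1, h2, h3⟩
            refine ⟨h1, h2, hat_eq_iff.mpr ⟨hup, hlo⟩,
              (greenR_rank1_iff h1 h2).mpr ⟨hup, ?_⟩⟩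
            by_contra hdom
            exact hdA ⟨α, β, ⟨h1, h2, h3⟩, hdom⟩
          · rintro ⟨h1, h2, h3, hR⟩
            obtain ⟨hup, hlo⟩ := hat_eq_iff.mp h3
            have hdom := ((greenR_rank1_iff h1 h2).mp hR).2
            obtain ⟨αB, βB, hTB, hcodB⟩ := hdB
            have HU := muUp_from_pair hσ hTB.1 hTB.2.1 hTB.2.2
              (hupall _ _ hTB) (hloall _ _ hTB) hcodB
            refine ⟨h1, h2, ?_⟩
            obtain ⟨a1, c1, hα⟩ := rank1_struct h1
            obtain ⟨a2, c2, hβ⟩ := rank1_struct h2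
            have hA : (upS α).r a1 a2 := by
              have := hdom a1
              rw [dom_iff_of_struct hα, dom_iff_of_struct hβ, ← hup] at this
              exact this.mp ((upS α).iseqv.refl a1)
            rw [hα, hβ, ← hup, ← hlo,
              show mk1 (upS α) (loS α) a2 c2 = mk1 (upS α) (loS α) a1 c2 from
                mk1_congr ((upS α).iseqv.symm hA) ((loS α).iseqv.refl c2)]
            exact HU (upS α) (loS α) a1 c1 c2
        · -- equality
          left
          funext α β
          apply propext
          constructor
          · rintro ⟨h1, h2, h3⟩
            refine ⟨h1, h2, eq_of_same_all h1 h2 (hupall α β ⟨h1, h2, h3⟩)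
              (hloall α β ⟨h1, h2, h3⟩) ?_ ?_⟩
            · by_contra hdom
              exact hdA ⟨α, β, ⟨h1, h2, h3⟩, hdom⟩
            · by_contra hcod
              exact hdB ⟨α, β, ⟨h1, h2, h3⟩, hcod⟩
          · rintro ⟨h1, h2, h3⟩
            subst h3
            exact ⟨h1, h2, hσ.1.refl _⟩

end TPM
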